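/- arXiv:2309.00823 — 6 statements merged into one kernel-verified Lean document; each statement's English description precedes it below -/
import Mathlib

section
/- The symmetrizer s̃ := Σ_{w∈Σ_n} t^{ℓ(w)} T_w in the Hecke algebra H_n(t) satisfies s̃² = [n]_{t²}! · s̃, where [k]_s = (1-s^k)/(1-s) and [k]_s! = [k]_s [k-1]_s ··· [1]_s. Consequently, if [n]_{t²}! is invertible, then s := s̃/[n]_{t²}! is an idempotent. -/
/-- The number of inversions of a permutation of `Fin n`, which equals its Coxeter length. -/
def invLen {n : ℕ} (w : Equiv.Perm (Fin n)) : ℕ :=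
  ((Finset.univ : Finset (Fin n × Fin n)).filter (fun p => p.1 < p.2 ∧ w p.2 < w p.1)).card

/-- The `s`-factorial `[n]_s! = ∏_{k=1}^n [k]_s`, where `[k]_s = 1 + s + ⋯ + s^{k-1}`. -/
def qFactorial {K : Type*} [Field K] (n : ℕ) (s : K) : K :=
  ∏ k ∈ Finset.range n, ∑ j ∈ Finset.range (k + 1), s ^ j

lemma swap_lt_swap_iff {n i : ℕ} (hi : i + 1 < n) (x y : Fin n)
    (h1 : ¬(x = ⟨i, Nat.lt_of_succ_lt hi⟩ ∧ y = ⟨i+1, hi⟩)) (h2 : ¬(x = ⟨i+1, hi⟩ ∧ y = ⟨i, Nat.lt_of_succ_lt hi⟩)) :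
    Equiv.swap (⟨i, Nat.lt_of_succ_lt hi⟩ : Fin n) ⟨i+1, hi⟩ x < Equiv.swap (⟨i, Nat.lt_of_succ_lt hi⟩ : Fin n) ⟨i+1, hi⟩ y ↔ x < y := by
  simp only [Equiv.swap_apply_def, Fin.ext_iff, Fin.lt_def, not_and, Fin.val_mk] at *
  split_ifs <;> simp only [Fin.lt_def, Fin.val_mk] <;> omega

lemma invLen_swap_mul {n i : ℕ} (hi : i + 1 < n) (w : Equiv.Perm (Fin n))
    (h : w⁻¹ ⟨i, Nat.lt_of_succ_lt hi⟩ < w⁻¹ ⟨i+1, hi⟩) :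
    invLen (Equiv.swap (⟨i, Nat.lt_of_succ_lt hi⟩ : Fin n) ⟨i+1, hi⟩ * w) = invLen w + 1 := by
  set a : Fin n := ⟨i, Nat.lt_of_succ_lt hi⟩ with ha
  set b : Fin n := ⟨i+1, hi⟩ with hb
  have hab : a < b := by simp [ha, hb, Fin.lt_def]
  have hqmem : (w⁻¹ a, w⁻¹ b) ∉
      (Finset.univ : Finset (Fin n × Fin n)).filter (fun p => p.1 < p.2 ∧ w p.2 < w p.1) := by
    simp only [Finset.mem_filter, Finset.mem_univ, true_and, not_and]
    intro _
    simp [not_lt_of_gt hab]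
  have key : ((Finset.univ : Finset (Fin n × Fin n)).filter
        (fun p => p.1 < p.2 ∧ (Equiv.swap a b * w) p.2 < (Equiv.swap a b * w) p.1))
      = insert (w⁻¹ a, w⁻¹ b)
        ((Finset.univ : Finset (Fin n × Fin n)).filter (fun p => p.1 < p.2 ∧ w p.2 < w p.1)) := by
    ext p
    simp only [Finset.mem_filter, Finset.mem_univ, true_and, Finset.mem_insert]
    simp only [Equiv.Perm.mul_apply]
    by_cases hq : p = (w⁻¹ a, w⁻¹ b)
    · subst hq
      simp [h, hab, Equiv.swap_apply_left, Equiv.swap_apply_right]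
      exact h
    · by_cases hq' : p = (w⁻¹ b, w⁻¹ a)
      · subst hq'
        have hne : w⁻¹ b ≠ w⁻¹ a := fun e => hab.ne' (w⁻¹.injective e)
        simp [not_lt_of_gt h, Prod.ext_iff, hne]
        have h' : ¬ w⁻¹ b < w⁻¹ a := not_lt_of_gt h
        exact iff_of_false (fun hh => h' hh.1) (by rintro (hh | hh); exact hab.ne hh.2; exact h' hh.1)
      · have h1 : ¬(w p.1 = a ∧ w p.2 = b) := by
          rintro ⟨e1, e2⟩
          exact hq (Prod.ext (by rw [← e1]; simp) (by rw [← e2]; simp))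
        have h2 : ¬(w p.1 = b ∧ w p.2 = a) := by
          rintro ⟨e1, e2⟩
          exact hq' (Prod.ext (by rw [← e1]; simp) (by rw [← e2]; simp))
        rw [swap_lt_swap_iff hi (w p.2) (w p.1) (by tauto) (by tauto)]
        simp [hq]
        intro e; exact absurd e hq
  rw [invLen, invLen, key, Finset.card_insert_of_notMem hqmem]

lemma invLen_swap_mul' {n i : ℕ} (hi : i + 1 < n) (w : Equiv.Perm (Fin n))
    (h : w⁻¹ ⟨i+1, hi⟩ < w⁻¹ ⟨i, Nat.lt_of_succ_lt hi⟩) :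
    invLen w = invLen (Equiv.swap (⟨i, Nat.lt_of_succ_lt hi⟩ : Fin n) ⟨i+1, hi⟩ * w) + 1 := by
  set a : Fin n := ⟨i, Nat.lt_of_succ_lt hi⟩ with ha
  set b : Fin n := ⟨i+1, hi⟩ with hb
  have key := invLen_swap_mul hi (Equiv.swap a b * w) (by
    rw [mul_inv_rev, Equiv.swap_inv]
    simp only [Equiv.Perm.mul_apply, Equiv.swap_apply_left, Equiv.swap_apply_right]
    show w⁻¹ (Equiv.swap a b a) < w⁻¹ (Equiv.swap a b b)
    rw [Equiv.swap_apply_left, Equiv.swap_apply_right]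
    exact h)
  rw [← mul_assoc, Equiv.swap_mul_self, one_mul] at key
  exact key

lemma exists_descent {n : ℕ} (w : Equiv.Perm (Fin n)) (hw : w ≠ 1) :
    ∃ i, ∃ hi : i + 1 < n, w⁻¹ ⟨i+1, hi⟩ < w⁻¹ ⟨i, Nat.lt_of_succ_lt hi⟩ := by
  by_contra hc
  push_neg at hc
  have step : ∀ (j : ℕ) (hj : j + 1 < n), w⁻¹ ⟨j, Nat.lt_of_succ_lt hj⟩ < w⁻¹ ⟨j+1, hj⟩ := by
    intro j hj
    refine lt_of_le_of_ne (hc j hj) (fun e => ?_)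
    have := (Equiv.injective w⁻¹) e
    simp [Fin.ext_iff] at this
  have mono : StrictMono (fun x : Fin n => w⁻¹ x) := by
    intro x y hxy
    have key : ∀ m, ∀ x y : Fin n, (y : ℕ) = m → x < y → w⁻¹ x < w⁻¹ y := by
      intro m
      induction m with
      | zero => intro x y hy hxy; rw [Fin.lt_def] at hxy; omega
      | succ m ihm =>
        intro x y hy hxy
        have hyn : m + 1 < n := by have := y.isLt; omega
        by_cases hx : (x : ℕ) = m
        · have hstep := step m hyn
          rwa [show (⟨m, by omega⟩ : Fin n) = x from Fin.ext hx.symm,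
            show (⟨m+1, hyn⟩ : Fin n) = y from Fin.ext hy.symm] at hstep
        · have hxm : (x : ℕ) < m := by rw [Fin.lt_def] at hxy; omega
          have h1 := ihm x ⟨m, by omega⟩ rfl (by rw [Fin.lt_def]; exact hxm)
          have h12 := h1.trans (step m hyn)
          rwa [show (⟨m+1, hyn⟩ : Fin n) = y from Fin.ext hy.symm] at h12
    exact key (y : ℕ) x y rfl hxy
  have hrange : Set.range (fun x : Fin n => w⁻¹ x) = Set.range (id : Fin n → Fin n) := by
    rw [Set.range_id, Set.range_eq_univ]
    exact (Equiv.surjective w⁻¹)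
  haveI : WellFoundedLT (Fin n) := Finite.to_wellFoundedLT
  have heq := (mono.range_inj strictMono_id).1 hrange
  apply hw
  have : w⁻¹ = 1 := Equiv.ext fun x => congrFun heq x
  rw [← inv_inv w, this, inv_one]

lemma pair_sum {n i : ℕ} (hi : i + 1 < n) {M : Type*} [AddCommMonoid M]
    (F : Equiv.Perm (Fin n) → M) :
    ∑ w : Equiv.Perm (Fin n), F w
      = ∑ w ∈ Finset.univ.filter
          (fun w : Equiv.Perm (Fin n) => w⁻¹ ⟨i, Nat.lt_of_succ_lt hi⟩ < w⁻¹ ⟨i+1, hi⟩),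
          (F w + F (Equiv.swap (⟨i, Nat.lt_of_succ_lt hi⟩ : Fin n) ⟨i+1, hi⟩ * w)) := by
  set a : Fin n := ⟨i, Nat.lt_of_succ_lt hi⟩ with ha
  set b : Fin n := ⟨i+1, hi⟩ with hb
  have hab : a ≠ b := by simp [ha, hb, Fin.ext_iff]
  rw [Finset.sum_add_distrib]
  have himg : (Finset.univ.filter
        (fun w : Equiv.Perm (Fin n) => w⁻¹ a < w⁻¹ b)).image
          (fun w => Equiv.swap a b * w)
      = Finset.univ.filter (fun w : Equiv.Perm (Fin n) => ¬ w⁻¹ a < w⁻¹ b) := by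
    ext v
    simp only [Finset.mem_image, Finset.mem_filter, Finset.mem_univ, true_and]
    constructor
    · rintro ⟨w, hw, rfl⟩
      rw [mul_inv_rev, Equiv.swap_inv]
      simp only [Equiv.Perm.mul_apply, Equiv.swap_apply_left, Equiv.swap_apply_right]
      exact not_lt_of_gt hw
    · intro hv
      refine ⟨Equiv.swap a b * v, ?_, by rw [← mul_assoc, Equiv.swap_mul_self, one_mul]⟩
      rw [mul_inv_rev, Equiv.swap_inv]
      simp only [Equiv.Perm.mul_apply, Equiv.swap_apply_left, Equiv.swap_apply_right]
      have hne : v⁻¹ b ≠ v⁻¹ a := fun e => hab ((Equiv.injective v⁻¹) e).symm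
      exact lt_of_le_of_ne (le_of_not_gt hv) hne
  have hinj : ∀ x ∈ Finset.univ.filter
      (fun w : Equiv.Perm (Fin n) => w⁻¹ a < w⁻¹ b), ∀ y ∈ Finset.univ.filter
      (fun w : Equiv.Perm (Fin n) => w⁻¹ a < w⁻¹ b),
      Equiv.swap a b * x = Equiv.swap a b * y → x = y :=
    fun x _ y _ h => mul_left_cancel h
  rw [← Finset.sum_image hinj, himg, Finset.sum_filter_add_sum_filter_not]

def insFun {n : ℕ} (p : Fin (n+1)) (e : Equiv.Perm (Fin n)) : Fin (n+1) → Fin (n+1) :=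
  fun x => Fin.cases p (fun i => p.succAbove (e i)) x

lemma insFun_zero {n : ℕ} (p : Fin (n+1)) (e : Equiv.Perm (Fin n)) : insFun p e 0 = p := rfl

lemma insFun_succ {n : ℕ} (p : Fin (n+1)) (e : Equiv.Perm (Fin n)) (i : Fin n) :
    insFun p e i.succ = p.succAbove (e i) := rfl

lemma insFun_injective {n : ℕ} (p : Fin (n+1)) (e : Equiv.Perm (Fin n)) :
    Function.Injective (insFun p e) := by
  intro x y h
  rcases Fin.eq_zero_or_eq_succ x with rfl | ⟨xi, rfl⟩ <;>
    rcases Fin.eq_zero_or_eq_succ y with rfl | ⟨yi, rfl⟩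
  · rfl
  · exact absurd h.symm (Fin.succAbove_ne p (e yi))
  · exact absurd h (Fin.succAbove_ne p (e xi))
  · rw [insFun_succ, insFun_succ] at h
    rw [e.injective (Fin.succAbove_right_injective h)]

noncomputable def insPerm {n : ℕ} (p : Fin (n+1)) (e : Equiv.Perm (Fin n)) : Equiv.Perm (Fin (n+1)) :=
  Equiv.ofBijective _ (Finite.injective_iff_bijective.mp (insFun_injective p e))

lemma insPerm_apply {n : ℕ} (p : Fin (n+1)) (e : Equiv.Perm (Fin n)) (x : Fin (n+1)) :
    insPerm p e x = insFun p e x := rfl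

lemma insPerm_bijective {n : ℕ} :
    Function.Bijective (fun pe : Fin (n+1) × Equiv.Perm (Fin n) => insPerm pe.1 pe.2) := by
  rw [Fintype.bijective_iff_injective_and_card]
  constructor
  · rintro ⟨p, e⟩ ⟨p', e'⟩ h
    simp only [Prod.mk.injEq]
    have h0 : p = p' := by
      have := congrArg (fun f => f 0) h
      simpa [insPerm_apply, insFun_zero] using this
    subst h0
    refine ⟨rfl, Equiv.ext fun i => ?_⟩
    have := congrArg (fun f => f i.succ) h
    simp only [insPerm_apply, insFun_succ] at this
    exact Fin.succAbove_right_injective this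
  · simp [Fintype.card_perm, Nat.factorial_succ]


@[simp] lemma insPerm_zero {n : ℕ} (p : Fin (n+1)) (e : Equiv.Perm (Fin n)) :
    insPerm p e 0 = p := rfl

@[simp] lemma insPerm_succ {n : ℕ} (p : Fin (n+1)) (e : Equiv.Perm (Fin n)) (i : Fin n) :
    insPerm p e i.succ = p.succAbove (e i) := rfl

lemma Equiv.Perm.apply_inv_self {α : Type*} (f : Equiv.Perm α) (x : α) : f (f⁻¹ x) = x :=
  f.apply_symm_apply x

lemma Equiv.Perm.inv_apply_self {α : Type*} (f : Equiv.Perm α) (x : α) : f⁻¹ (f x) = x :=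
  f.symm_apply_apply x

lemma invLen_insPerm {n : ℕ} (p : Fin (n+1)) (e : Equiv.Perm (Fin n)) :
    invLen (insPerm p e) = p.val + invLen e := by
  classical
  have hsplit := Finset.card_filter_add_card_filter_not
    (s := (Finset.univ : Finset (Fin (n+1) × Fin (n+1))).filter
      (fun q => q.1 < q.2 ∧ insPerm p e q.2 < insPerm p e q.1)) (p := fun q => q.1 = 0)
  rw [invLen, ← hsplit]
  congr 1
  · -- card of pairs with first coordinate 0 equals p.val
    rw [Finset.filter_filter, ← Finset.card_range p.val]
    refine Finset.card_bij'
      (fun q _ => ((insPerm p e q.2 : Fin (n+1)) : ℕ))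
      (fun m hm => ((0 : Fin (n+1)),
        (e⁻¹ ⟨m, by have := p.is_le; simp only [Finset.mem_range] at hm; omega⟩).succ))
      ?_ ?_ ?_ ?_
    · intro q hq
      simp only [Finset.mem_filter, Finset.mem_univ, true_and] at hq
      obtain ⟨⟨h12, hlt⟩, h0⟩ := hq
      rw [h0, insPerm_zero] at hlt
      exact Finset.mem_range.mpr (Fin.lt_def.mp hlt)
    · intro m hm
      simp only [Finset.mem_range] at hm
      have hmn : m < n := by have := p.is_le; omega
      simp only [Finset.mem_filter, Finset.mem_univ, true_and]
      refine ⟨⟨Fin.succ_pos _, ?_⟩, by simp⟩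
      show insPerm p e _ < insPerm p e 0
      rw [insPerm_zero, insPerm_succ, Equiv.Perm.apply_inv_self,
        Fin.succAbove_of_castSucc_lt _ _ (by simpa [Fin.lt_def] using hm)]
      simpa [Fin.lt_def] using hm
    · intro q hq
      simp only [Finset.mem_filter, Finset.mem_univ, true_and] at hq
      obtain ⟨⟨h12, hlt⟩, h0⟩ := hq
      rcases Fin.eq_zero_or_eq_succ q.2 with h2 | ⟨j, hj⟩
      · rw [h0, h2] at h12; exact absurd h12 (lt_irrefl _)
      · rw [h0, insPerm_zero] at hlt
        have hltp : insPerm p e q.2 < p := hlt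
        have hcast : insPerm p e q.2 = (e j).castSucc := by
          rw [hj, insPerm_succ]
          refine Fin.succAbove_of_castSucc_lt _ _ ?_
          by_contra hcon
          rw [hj, insPerm_succ,
            Fin.succAbove_of_le_castSucc _ _ (le_of_not_gt hcon)] at hltp
          simp only [Fin.lt_def, Fin.le_def, Fin.val_succ, Fin.coe_castSucc,
            not_lt] at hltp hcon
          omega
        beta_reduce
        refine Prod.ext h0.symm ?_
        have key : ∀ h : ((insPerm p e q.2 : Fin (n+1)) : ℕ) < n,
            (e⁻¹ (⟨((insPerm p e q.2 : Fin (n+1)) : ℕ), h⟩ : Fin n)).succ = q.2 := by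
          intro h
          have hv : (⟨((insPerm p e q.2 : Fin (n+1)) : ℕ), h⟩ : Fin n) = e j :=
            Fin.ext (by simp [hcast])
          rw [hv, Equiv.Perm.inv_apply_self, ← hj]
        exact key _
    · intro m hm
      simp only [Finset.mem_range] at hm
      beta_reduce
      show ((insPerm p e (e⁻¹ ⟨m, _⟩).succ : Fin (n+1)) : ℕ) = m
      rw [insPerm_succ, Equiv.Perm.apply_inv_self,
        Fin.succAbove_of_castSucc_lt _ _ (by simpa [Fin.lt_def] using hm)]
      rfl
  · -- card of pairs with nonzero first coordinate equals invLen e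
    rw [Finset.filter_filter, invLen]
    have himg : (Finset.univ : Finset (Fin (n+1) × Fin (n+1))).filter
          (fun q => (q.1 < q.2 ∧ insPerm p e q.2 < insPerm p e q.1) ∧ ¬ q.1 = 0)
        = ((Finset.univ : Finset (Fin n × Fin n)).filter
            (fun q => q.1 < q.2 ∧ e q.2 < e q.1)).image
          (fun q => (q.1.succ, q.2.succ)) := by
      ext q
      simp only [Finset.mem_filter, Finset.mem_univ, true_and, Finset.mem_image]
      constructor
      · rintro ⟨⟨h12, hlt⟩, h0⟩
        rcases Fin.eq_zero_or_eq_succ q.1 with h1 | ⟨i, hi⟩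
        · exact absurd h1 h0
        rcases Fin.eq_zero_or_eq_succ q.2 with h2 | ⟨j, hj⟩
        · rw [hi, h2] at h12; exact absurd (lt_trans (Fin.succ_pos i) h12) (lt_irrefl _)
        refine ⟨(i, j), ⟨?_, ?_⟩, ?_⟩
        · rw [hi, hj, Fin.succ_lt_succ_iff] at h12; exact h12
        · rw [hi, hj, insPerm_succ, insPerm_succ, Fin.succAbove_lt_succAbove_iff] at hlt
          exact hlt
        · exact Prod.ext hi.symm hj.symm
      · rintro ⟨r, ⟨h12, hlt⟩, rfl⟩
        refine ⟨⟨Fin.succ_lt_succ_iff.mpr h12, ?_⟩, Fin.succ_ne_zero _⟩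
        show insPerm p e r.2.succ < insPerm p e r.1.succ
        rw [insPerm_succ, insPerm_succ, Fin.succAbove_lt_succAbove_iff]
        exact hlt
    rw [himg, Finset.card_image_of_injective]
    intro x y hxy
    rw [Prod.ext_iff] at hxy ⊢
    exact ⟨Fin.succ_injective _ hxy.1, Fin.succ_injective _ hxy.2⟩

lemma invLen_one_eq_zero {n : ℕ} : invLen (1 : Equiv.Perm (Fin n)) = 0 := by
  rw [invLen, Finset.card_eq_zero, Finset.filter_eq_empty_iff]
  rintro q -
  simp only [Equiv.Perm.one_apply, not_and]
  exact fun h => not_lt_of_gt h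

lemma sum_pow_invLen {K : Type*} [Field K] (n : ℕ) (s : K) :
    ∑ w : Equiv.Perm (Fin n), s ^ invLen w = qFactorial n s := by
  induction n with
  | zero =>
    have hw1 : ∀ w : Equiv.Perm (Fin 0), w = 1 := fun w => Equiv.ext (fun x => x.elim0)
    have hsum : ∑ w : Equiv.Perm (Fin 0), s ^ invLen w = ∑ _w : Equiv.Perm (Fin 0), (1 : K) :=
      Finset.sum_congr rfl fun w _ => by rw [hw1 w, invLen_one_eq_zero, pow_zero]
    rw [hsum, qFactorial]
    simp [Fintype.card_perm]
  | succ n ih =>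
    have hbij := Fintype.sum_bijective
      (fun pe : Fin (n+1) × Equiv.Perm (Fin n) => insPerm pe.1 pe.2) insPerm_bijective
      (fun pe => s ^ (pe.1.val + invLen pe.2)) (fun w => s ^ invLen w)
      (fun pe => by simp [invLen_insPerm])
    rw [← hbij]
    rw [Fintype.sum_prod_type]
    simp only [pow_add]
    rw [← Finset.sum_mul_sum]
    rw [ih, show qFactorial (n+1) s = qFactorial n s * ∑ j ∈ Finset.range (n+1), s ^ j from by
      rw [qFactorial, qFactorial, Finset.prod_range_succ]]
    rw [Fin.sum_univ_eq_sum_range (fun j => s ^ j)]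
    ring

section Algebra

variable {K : Type*} [Field K] {A : Type*} [Ring A] [Algebra K A]
    {n : ℕ} (t : K) (T : ℕ → A) (Tw : Equiv.Perm (Fin n) → A)

lemma quad_expand (ht : t ≠ 0)
    (hquad : ∀ i, i + 1 < n →
      (T i - algebraMap K A t) * (T i + algebraMap K A t⁻¹) = 0)
    (i : ℕ) (hi : i + 1 < n) :
    T i * T i = (t - t⁻¹) • T i + 1 := by
  have h := hquad i hi
  rw [sub_mul, mul_add, mul_add, ← Algebra.commutes t⁻¹ (T i), ← map_mul,
    mul_inv_cancel₀ ht, map_one, sub_eq_zero] at h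
  rw [sub_smul, Algebra.smul_def, Algebra.smul_def, sub_add_eq_add_sub]
  exact eq_sub_of_add_eq h

lemma Ti_S (ht : t ≠ 0)
    (hquad : ∀ i, i + 1 < n →
      (T i - algebraMap K A t) * (T i + algebraMap K A t⁻¹) = 0)
    (hTwmul : ∀ (w : Equiv.Perm (Fin n)) (i : ℕ) (hi : i + 1 < n),
      invLen ((Equiv.swap (⟨i, Nat.lt_of_succ_lt hi⟩ : Fin n) ⟨i + 1, hi⟩) * w) = invLen w + 1 →
      Tw ((Equiv.swap (⟨i, Nat.lt_of_succ_lt hi⟩ : Fin n) ⟨i + 1, hi⟩) * w) = T i * Tw w)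
    (i : ℕ) (hi : i + 1 < n) :
    T i * (∑ w : Equiv.Perm (Fin n), t ^ invLen w • Tw w)
      = t • (∑ w : Equiv.Perm (Fin n), t ^ invLen w • Tw w) := by
  rw [Finset.mul_sum, Finset.smul_sum]
  simp_rw [mul_smul_comm]
  rw [pair_sum hi (fun w => t ^ invLen w • (T i * Tw w)),
    pair_sum hi (fun w => t • (t ^ invLen w • Tw w))]
  refine Finset.sum_congr rfl fun w hw => ?_
  simp only [Finset.mem_filter, Finset.mem_univ, true_and] at hw
  have hlen := invLen_swap_mul hi w hw
  have hT := hTwmul w i hi hlen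
  rw [hlen, hT]
  have hTT : T i * (T i * Tw w) = (t - t⁻¹) • (T i * Tw w) + Tw w := by
    rw [← mul_assoc, quad_expand t T ht hquad i hi, add_mul, smul_mul_assoc, one_mul]
  rw [hTT]
  match_scalars
  · field_simp
    ring
  · ring

lemma Tw_S (ht : t ≠ 0)
    (hquad : ∀ i, i + 1 < n →
      (T i - algebraMap K A t) * (T i + algebraMap K A t⁻¹) = 0)
    (hTw1 : Tw 1 = 1)
    (hTwmul : ∀ (w : Equiv.Perm (Fin n)) (i : ℕ) (hi : i + 1 < n),
      invLen ((Equiv.swap (⟨i, Nat.lt_of_succ_lt hi⟩ : Fin n) ⟨i + 1, hi⟩) * w) = invLen w + 1 →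
      Tw ((Equiv.swap (⟨i, Nat.lt_of_succ_lt hi⟩ : Fin n) ⟨i + 1, hi⟩) * w) = T i * Tw w)
    (w : Equiv.Perm (Fin n)) :
    Tw w * (∑ v : Equiv.Perm (Fin n), t ^ invLen v • Tw v)
      = t ^ invLen w • (∑ v : Equiv.Perm (Fin n), t ^ invLen v • Tw v) := by
  set S := ∑ v : Equiv.Perm (Fin n), t ^ invLen v • Tw v with hS
  suffices H : ∀ m, ∀ w : Equiv.Perm (Fin n), invLen w = m → Tw w * S = t ^ invLen w • S by
    exact H _ w rfl
  intro m
  induction m using Nat.strong_induction_on with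
  | _ m ih =>
    intro w hw
    by_cases h1 : w = 1
    · subst h1
      rw [hTw1, one_mul, invLen_one_eq_zero, pow_zero, one_smul]
    · obtain ⟨i, hi, hdesc⟩ := exists_descent w h1
      set s : Equiv.Perm (Fin n) := Equiv.swap ⟨i, Nat.lt_of_succ_lt hi⟩ ⟨i+1, hi⟩ with hs
      set w' : Equiv.Perm (Fin n) := s * w with hw'
      have hsw : s * w' = w := by rw [hw', ← mul_assoc, Equiv.swap_mul_self, one_mul]
      have hlen' : invLen w = invLen w' + 1 := invLen_swap_mul' hi w hdesc
      have hTww : Tw w = T i * Tw w' := by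
        have hmul := hTwmul w' i hi (by rw [← hs, hsw, hlen'])
        rw [← hs, hsw] at hmul
        exact hmul
      calc Tw w * S = T i * (Tw w' * S) := by rw [hTww, mul_assoc]
        _ = T i * (t ^ invLen w' • S) := by
            rw [ih (invLen w') (by omega) w' rfl]
        _ = t ^ invLen w' • (T i * S) := mul_smul_comm _ _ _
        _ = t ^ invLen w' • (t • S) := by
            rw [hS, Ti_S t T Tw ht hquad hTwmul i hi]
        _ = t ^ invLen w • S := by rw [smul_smul, hlen', pow_succ]

end Algebra

/-- In the Hecke algebra `H_n(t)`, the symmetrizer `s̃ = ∑_w t^{ℓ(w)} T_w` satisfies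
`s̃² = [n]_{t²}! ⬝ s̃`; consequently if `[n]_{t²}!` is invertible then `s̃/[n]_{t²}!`
is idempotent. -/
theorem hecke_symmetrizer_idempotent
    {K : Type*} [Field K] {A : Type*} [Ring A] [Algebra K A]
    (n : ℕ) (t : K) (ht : t ≠ 0)
    (T : ℕ → A) (Tw : Equiv.Perm (Fin n) → A)
    (hquad : ∀ i, i + 1 < n →
      (T i - algebraMap K A t) * (T i + algebraMap K A t⁻¹) = 0)
    (hbraid : ∀ i, i + 2 < n →
      T i * T (i + 1) * T i = T (i + 1) * T i * T (i + 1))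
    (hcomm : ∀ i j, i + 2 ≤ j → j + 1 < n → T i * T j = T j * T i)
    (hTw1 : Tw 1 = 1)
    (hTwmul : ∀ (w : Equiv.Perm (Fin n)) (i : ℕ) (hi : i + 1 < n),
      invLen ((Equiv.swap (⟨i, by omega⟩ : Fin n) ⟨i + 1, hi⟩) * w) = invLen w + 1 →
      Tw ((Equiv.swap (⟨i, by omega⟩ : Fin n) ⟨i + 1, hi⟩) * w) = T i * Tw w) :
    (∑ w : Equiv.Perm (Fin n), t ^ invLen w • Tw w) *
        (∑ w : Equiv.Perm (Fin n), t ^ invLen w • Tw w)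
      = qFactorial n (t ^ 2) • (∑ w : Equiv.Perm (Fin n), t ^ invLen w • Tw w)
    ∧ ∀ u : K, qFactorial n (t ^ 2) * u = 1 →
        (u • ∑ w : Equiv.Perm (Fin n), t ^ invLen w • Tw w) *
            (u • ∑ w : Equiv.Perm (Fin n), t ^ invLen w • Tw w)
          = u • ∑ w : Equiv.Perm (Fin n), t ^ invLen w • Tw w := by
  set S := ∑ w : Equiv.Perm (Fin n), t ^ invLen w • Tw w with hS
  have main : S * S = qFactorial n (t ^ 2) • S := by
    rw [hS]
    rw [Finset.sum_mul]
    simp_rw [smul_mul_assoc]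
    have hterm : ∀ w : Equiv.Perm (Fin n),
        t ^ invLen w • (Tw w * S) = ((t ^ 2) ^ invLen w) • S := by
      intro w
      rw [hS, Tw_S t T Tw ht hquad hTw1 hTwmul w, smul_smul, ← pow_add]
      congr 1
      ring
    calc ∑ w : Equiv.Perm (Fin n), t ^ invLen w • (Tw w * S)
        = ∑ w : Equiv.Perm (Fin n), ((t ^ 2) ^ invLen w) • S := by
          exact Finset.sum_congr rfl fun w _ => hterm w
      _ = (∑ w : Equiv.Perm (Fin n), (t ^ 2) ^ invLen w) • S := by
          rw [Finset.sum_smul]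
      _ = qFactorial n (t ^ 2) • S := by rw [sum_pow_invLen]
  refine ⟨main, fun u hu => ?_⟩
  rw [smul_mul_assoc, mul_smul_comm, main, smul_smul, smul_smul]
  congr 1
  calc u * u * qFactorial n (t ^ 2) = u * (qFactorial n (t ^ 2) * u) := by ring
    _ = u := by rw [hu, mul_one]
end

section
/- In the GL_n double affine Hecke algebra with generators T_i (1 ≤ i ≤ n-1), X_j^{±1} (1 ≤ j ≤ n), π^{±1}, the elements Y_i := T_i ··· T_{n-1} π^{-1} T_1^{-1} ··· T_{i-1}^{-1} pairwise commute: Y_i Y_j = Y_j Y_i for all i, j. -/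
def dahaProd {A : Type*} [Ring A] (f : ℕ → A) (a k : ℕ) : A :=
  ((List.range' a k).map f).prod

section helpers
variable {A : Type*} [Ring A]

lemma dahaProd_zero (f : ℕ → A) (a : ℕ) : dahaProd f a 0 = 1 := rfl

lemma dahaProd_succ_left (f : ℕ → A) (a k : ℕ) :
    dahaProd f a (k + 1) = f a * dahaProd f (a + 1) k := by
  simp [dahaProd, List.range'_succ]

lemma dahaProd_succ_right (f : ℕ → A) (a k : ℕ) :
    dahaProd f a (k + 1) = dahaProd f a k * f (a + k) := by
  simp [dahaProd, List.range'_concat]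

lemma commute_of_inv {x y yi : A} (h : x * y = y * x)
    (h1 : y * yi = 1) (h2 : yi * y = 1) : x * yi = yi * x := by
  calc x * yi = yi * y * (x * yi) := by rw [h2, one_mul]
    _ = yi * (y * x) * yi := by noncomm_ring
    _ = yi * (x * y) * yi := by rw [h]
    _ = yi * x * (y * yi) := by noncomm_ring
    _ = yi * x := by rw [h1, mul_one]

lemma cancel_right {u v x y : A} (huv : u * v = 1) (h : x * u = y * u) : x = y := by
  have h2 := congrArg (· * v) h
  simpa only [mul_assoc, huv, mul_one] using h2

lemma commute_dahaProd (f : ℕ → A) (z : A) :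
    ∀ k a, (∀ m, a ≤ m → m < a + k → z * f m = f m * z) →
      z * dahaProd f a k = dahaProd f a k * z := by
  intro k
  induction k with
  | zero => intro a _; simp [dahaProd_zero]
  | succ k ih =>
      intro a h
      rw [dahaProd_succ_left, ← mul_assoc, h a (le_refl a) (by omega), mul_assoc,
        ih (a+1) (fun m hm hm' => h m (by omega) (by omega)), mul_assoc]

lemma dahaProd_commute_dahaProd (f g : ℕ → A) {a k b l : ℕ}
    (h : ∀ m m', a ≤ m → m < a + k → b ≤ m' → m' < b + l → f m * g m' = g m' * f m) :
    dahaProd f a k * dahaProd g b l = dahaProd g b l * dahaProd f a k := by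
  exact commute_dahaProd g (dahaProd f a k) l b (fun m' hm' hm'' =>
    (commute_dahaProd f (g m') k a
      (fun m hm hm2 => (h m m' hm hm2 hm' hm'').symm)).symm)

end helpers

section daha
variable {A : Type*} [Ring A] (n : ℕ) (T Tinv : ℕ → A) (π πinv : A)

/-- slide: `T_{j+1} (T_a ⋯ T_{a+k-1}) = (T_a ⋯ T_{a+k-1}) T_j` for `a ≤ j ≤ a+k-2`. -/
lemma daha_slide
    (hbraid : ∀ i, 1 ≤ i → i + 1 ≤ n - 1 → T i * T (i+1) * T i = T (i+1) * T i * T (i+1))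
    (hTcomm : ∀ i j, 1 ≤ i → i + 2 ≤ j → j ≤ n - 1 → T i * T j = T j * T i) :
    ∀ k a j, 1 ≤ a → a ≤ j → j + 2 ≤ a + k → a + k ≤ n →
      T (j+1) * dahaProd T a k = dahaProd T a k * T j := by
  intro k
  induction k with
  | zero => intro a j _ haj hjk _; exact absurd hjk (by omega)
  | succ k ih =>
    intro a j ha haj hjk hkn
    rcases eq_or_lt_of_le haj with rfl | haj'
    · -- j = a
      match k, hjk, hkn, ih with
      | 0, hjk, _, _ => exact absurd hjk (by omega)
      | k+1, hjk, hkn, ih =>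
        rw [dahaProd_succ_left, dahaProd_succ_left]
        have hb := hbraid a ha (by omega)
        have hc : T a * dahaProd T (a+1+1) k = dahaProd T (a+1+1) k * T a :=
          commute_dahaProd T (T a) k (a+2) (fun m hm hm' => hTcomm a m ha (by omega) (by omega))
        calc T (a+1) * (T a * (T (a+1) * dahaProd T (a+1+1) k))
            = (T (a+1) * T a * T (a+1)) * dahaProd T (a+1+1) k := by noncomm_ring
          _ = (T a * T (a+1) * T a) * dahaProd T (a+1+1) k := by rw [← hb]
          _ = T a * T (a+1) * (T a * dahaProd T (a+1+1) k) := by noncomm_ring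
          _ = T a * T (a+1) * (dahaProd T (a+1+1) k * T a) := by rw [hc]
          _ = T a * (T (a+1) * dahaProd T (a+1+1) k) * T a := by noncomm_ring
    · -- a < j
      rw [dahaProd_succ_left]
      have hc : T (j+1) * T a = T a * T (j+1) :=
        (hTcomm a (j+1) ha (by omega) (by omega)).symm
      calc T (j+1) * (T a * dahaProd T (a+1) k)
          = (T (j+1) * T a) * dahaProd T (a+1) k := by rw [mul_assoc]
        _ = T a * (T (j+1) * dahaProd T (a+1) k) := by rw [hc, mul_assoc]
        _ = T a * (dahaProd T (a+1) k * T j) := by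
            rw [ih (a+1) j (by omega) (by omega) (by omega) (by omega)]
        _ = T a * dahaProd T (a+1) k * T j := by rw [mul_assoc]

lemma daha_pishift (f : ℕ → A)
    (hshift : ∀ m, 1 ≤ m → m + 1 ≤ n - 1 → πinv * f (m+1) = f m * πinv) :
    ∀ k a, 1 ≤ a → a + k ≤ n - 1 → πinv * dahaProd f (a+1) k = dahaProd f a k * πinv := by
  intro k
  induction k with
  | zero => intro a _ _; simp [dahaProd_zero]
  | succ k ih =>
    intro a ha hk
    rw [dahaProd_succ_left, dahaProd_succ_left, ← mul_assoc,
      hshift a ha (by omega), mul_assoc, ih (a+1) (by omega) (by omega), mul_assoc]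

lemma daha_D
    (hbraid : ∀ i, 1 ≤ i → i + 1 ≤ n - 1 → T i * T (i+1) * T i = T (i+1) * T i * T (i+1))
    (hTcomm : ∀ i j, 1 ≤ i → i + 2 ≤ j → j ≤ n - 1 → T i * T j = T j * T i) :
    ∀ d i, 1 ≤ i → i + d = n - 1 →
      T i * (dahaProd T (i+1) d * dahaProd T i d)
        = (dahaProd T (i+1) d * dahaProd T i d) * T (n-1) := by
  intro d
  induction d with
  | zero =>
      intro i _ hd
      obtain rfl : i = n - 1 := by omega
      simp [dahaProd_zero]
  | succ d ih =>
      intro i hi hd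
      have hc : T i * dahaProd T (i+1+1) d = dahaProd T (i+1+1) d * T i :=
        commute_dahaProd T (T i) d (i+2) (fun m hm hm' => hTcomm i m hi (by omega) (by omega))
      have key : dahaProd T (i+1) (d+1) * dahaProd T i (d+1)
          = T (i+1) * T i * (dahaProd T (i+1+1) d * dahaProd T (i+1) d) := by
        rw [dahaProd_succ_left T (i+1) d, dahaProd_succ_left T i d]
        calc T (i+1) * dahaProd T (i+1+1) d * (T i * dahaProd T (i+1) d)
            = T (i+1) * (dahaProd T (i+1+1) d * T i) * dahaProd T (i+1) d := by noncomm_ring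
          _ = T (i+1) * (T i * dahaProd T (i+1+1) d) * dahaProd T (i+1) d := by rw [← hc]
          _ = T (i+1) * T i * (dahaProd T (i+1+1) d * dahaProd T (i+1) d) := by noncomm_ring
      have hb := hbraid i hi (by omega)
      have ih2 := ih (i+1) (by omega) (by omega)
      calc T i * (dahaProd T (i+1) (d+1) * dahaProd T i (d+1))
          = (T i * T (i+1) * T i) * (dahaProd T (i+1+1) d * dahaProd T (i+1) d) := by
            rw [key]; noncomm_ring
        _ = (T (i+1) * T i * T (i+1)) * (dahaProd T (i+1+1) d * dahaProd T (i+1) d) := by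
            rw [hb]
        _ = T (i+1) * T i * (T (i+1) * (dahaProd T (i+1+1) d * dahaProd T (i+1) d)) := by
            noncomm_ring
        _ = T (i+1) * T i * ((dahaProd T (i+1+1) d * dahaProd T (i+1) d) * T (n-1)) := by
            rw [ih2]
        _ = (dahaProd T (i+1) (d+1) * dahaProd T i (d+1)) * T (n-1) := by
            rw [key]; noncomm_ring

lemma daha_E
    (hTinv : ∀ i, 1 ≤ i → i ≤ n - 1 → T i * Tinv i = 1 ∧ Tinv i * T i = 1)
    (hbraid : ∀ i, 1 ≤ i → i + 1 ≤ n - 1 → T i * T (i+1) * T i = T (i+1) * T i * T (i+1))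
    (hTcomm : ∀ i j, 1 ≤ i → i + 2 ≤ j → j ≤ n - 1 → T i * T j = T j * T i) :
    ∀ m, m + 1 ≤ n - 1 →
      T 1 * (dahaProd Tinv 2 m * dahaProd Tinv 1 m)
        = (dahaProd Tinv 2 m * dahaProd Tinv 1 m) * T (m+1) := by
  intro m
  induction m with
  | zero => intro _; simp [dahaProd_zero]
  | succ m ih =>
    intro hm
    have u1 := hTinv (m+1) (by omega) (by omega)
    have u2 := hTinv (m+2) (by omega) (by omega)
    -- commute Tinv (m+2) past dahaProd Tinv 1 m
    have hc : Tinv (m+2) * dahaProd Tinv 1 m = dahaProd Tinv 1 m * Tinv (m+2) := by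
      refine commute_dahaProd Tinv (Tinv (m+2)) m 1 (fun x hx hx' => ?_)
      have ux := hTinv x hx (by omega)
      have ha : T x * Tinv (m+2) = Tinv (m+2) * T x :=
        commute_of_inv (hTcomm x (m+2) hx (by omega) (by omega)) u2.1 u2.2
      exact commute_of_inv ha.symm ux.1 ux.2
    have key : dahaProd Tinv 2 (m+1) * dahaProd Tinv 1 (m+1)
        = (dahaProd Tinv 2 m * dahaProd Tinv 1 m) * (Tinv (m+2) * Tinv (m+1)) := by
      rw [dahaProd_succ_right Tinv 2 m, dahaProd_succ_right Tinv 1 m,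
        show 2 + m = m + 2 from by omega, show 1 + m = m + 1 from by omega]
      calc dahaProd Tinv 2 m * Tinv (m+2) * (dahaProd Tinv 1 m * Tinv (m+1))
          = dahaProd Tinv 2 m * (Tinv (m+2) * dahaProd Tinv 1 m) * Tinv (m+1) := by
            noncomm_ring
        _ = dahaProd Tinv 2 m * (dahaProd Tinv 1 m * Tinv (m+2)) * Tinv (m+1) := by rw [hc]
        _ = (dahaProd Tinv 2 m * dahaProd Tinv 1 m) * (Tinv (m+2) * Tinv (m+1)) := by
            noncomm_ring
    have hb := hbraid (m+1) (by omega) (by omega)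
    -- key braid consequence : T (m+1) * (Tinv (m+2) * Tinv (m+1)) = Tinv (m+2) * Tinv (m+1) * T (m+2)
    have hbk : T (m+1) * (Tinv (m+2) * Tinv (m+1))
        = (Tinv (m+2) * Tinv (m+1)) * T (m+2) := by
      refine cancel_right (u := T (m+1) * T (m+2)) (v := Tinv (m+2) * Tinv (m+1)) ?_ ?_
      · calc T (m+1) * T (m+2) * (Tinv (m+2) * Tinv (m+1))
            = T (m+1) * (T (m+2) * Tinv (m+2)) * Tinv (m+1) := by noncomm_ring
          _ = T (m+1) * Tinv (m+1) := by rw [u2.1, mul_one]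
          _ = 1 := u1.1
      · have lhs : T (m+1) * (Tinv (m+2) * Tinv (m+1)) * (T (m+1) * T (m+2)) = T (m+1) := by
          calc T (m+1) * (Tinv (m+2) * Tinv (m+1)) * (T (m+1) * T (m+2))
              = T (m+1) * Tinv (m+2) * (Tinv (m+1) * T (m+1)) * T (m+2) := by noncomm_ring
            _ = T (m+1) * Tinv (m+2) * T (m+2) := by rw [u1.2, mul_one, mul_assoc]
            _ = T (m+1) * (Tinv (m+2) * T (m+2)) := by rw [mul_assoc]
            _ = T (m+1) := by rw [u2.2, mul_one]
        have rhs : (Tinv (m+2) * Tinv (m+1)) * T (m+2) * (T (m+1) * T (m+2)) = T (m+1) := by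
          calc (Tinv (m+2) * Tinv (m+1)) * T (m+2) * (T (m+1) * T (m+2))
              = Tinv (m+2) * Tinv (m+1) * (T (m+2) * T (m+1) * T (m+2)) := by noncomm_ring
            _ = Tinv (m+2) * Tinv (m+1) * (T (m+1) * T (m+2) * T (m+1)) := by rw [← hb]
            _ = Tinv (m+2) * (Tinv (m+1) * T (m+1)) * (T (m+2) * T (m+1)) := by noncomm_ring
            _ = Tinv (m+2) * T (m+2) * T (m+1) := by rw [u1.2, mul_one, mul_assoc]
            _ = T (m+1) := by rw [u2.2, one_mul]
        rw [lhs, rhs]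
    have ih2 := ih (by omega)
    calc T 1 * (dahaProd Tinv 2 (m+1) * dahaProd Tinv 1 (m+1))
        = T 1 * (dahaProd Tinv 2 m * dahaProd Tinv 1 m) * (Tinv (m+2) * Tinv (m+1)) := by
          rw [key]; noncomm_ring
      _ = (dahaProd Tinv 2 m * dahaProd Tinv 1 m) * T (m+1) * (Tinv (m+2) * Tinv (m+1)) := by
          rw [ih2]
      _ = (dahaProd Tinv 2 m * dahaProd Tinv 1 m)
            * (T (m+1) * (Tinv (m+2) * Tinv (m+1))) := by noncomm_ring
      _ = (dahaProd Tinv 2 m * dahaProd Tinv 1 m)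
            * ((Tinv (m+2) * Tinv (m+1)) * T (m+2)) := by rw [hbk]
      _ = (dahaProd Tinv 2 (m+1) * dahaProd Tinv 1 (m+1)) * T (m+1+1) := by
          rw [key]; noncomm_ring

lemma daha_PP
    (hπinv : π * πinv = 1 ∧ πinv * π = 1)
    (hπT : ∀ i, 1 ≤ i → i + 1 ≤ n - 1 → π * T i = T (i+1) * π)
    (hπnT : ∀ i, 1 ≤ i → i ≤ n - 1 → π ^ n * T i = T i * π ^ n)
    (hn : 2 ≤ n) :
    T (n-1) * (πinv * πinv) = (πinv * πinv) * T 1 := by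
  obtain ⟨hp1, hp2⟩ := hπinv
  have hpow : ∀ k, π ^ k * πinv ^ k = 1 := by
    intro k
    induction k with
    | zero => simp
    | succ k ih =>
      rw [pow_succ, pow_succ']
      calc π ^ k * π * (πinv * πinv ^ k)
          = π ^ k * (π * πinv) * πinv ^ k := by noncomm_ring
        _ = π ^ k * πinv ^ k := by rw [hp1, mul_one]
        _ = 1 := ih
  have hchain : ∀ k, k + 1 ≤ n - 1 → π ^ k * T 1 = T (1+k) * π ^ k := by
    intro k
    induction k with
    | zero => intro _; simp
    | succ k ih =>
      intro hk
      rw [pow_succ']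
      calc π * π ^ k * T 1 = π * (π ^ k * T 1) := by rw [mul_assoc]
        _ = π * (T (1+k) * π ^ k) := by rw [ih (by omega)]
        _ = (π * T (1+k)) * π ^ k := by rw [mul_assoc]
        _ = (T (1+k+1) * π) * π ^ k := by rw [hπT (1+k) (by omega) (by omega)]
        _ = T (1+(k+1)) * (π * π ^ k) := by rw [mul_assoc, show 1+k+1 = 1+(k+1) from by omega]
  have h1 : π ^ (n-2) * T 1 = T (n-1) * π ^ (n-2) := by
    have := hchain (n-2) (by omega)
    rwa [show 1 + (n-2) = n - 1 from by omega] at this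
  have hsplit : π ^ n = π ^ 2 * π ^ (n-2) := by
    rw [← pow_add, show 2 + (n-2) = n from by omega]
  have h2 : T 1 * π ^ n = π ^ 2 * (T (n-1) * π ^ (n-2)) := by
    rw [← hπnT 1 (by omega) (by omega), hsplit, mul_assoc, h1]
  have h3 : T 1 * π ^ 2 = π ^ 2 * T (n-1) := by
    calc T 1 * π ^ 2 = T 1 * π ^ 2 * (π ^ (n-2) * πinv ^ (n-2)) := by
          rw [hpow, mul_one]
      _ = (T 1 * (π ^ 2 * π ^ (n-2))) * πinv ^ (n-2) := by noncomm_ring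
      _ = (T 1 * π ^ n) * πinv ^ (n-2) := by rw [← hsplit]
      _ = (π ^ 2 * (T (n-1) * π ^ (n-2))) * πinv ^ (n-2) := by rw [h2]
      _ = π ^ 2 * T (n-1) * (π ^ (n-2) * πinv ^ (n-2)) := by noncomm_ring
      _ = π ^ 2 * T (n-1) := by rw [hpow, mul_one]
  have hQP : (πinv * πinv) * π ^ 2 = 1 := by
    rw [pow_two]
    calc πinv * πinv * (π * π) = πinv * (πinv * π) * π := by noncomm_ring
      _ = 1 := by rw [hp2, mul_one, hp2]
  have hPQ : π ^ 2 * (πinv * πinv) = 1 := by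
    rw [pow_two]
    calc π * π * (πinv * πinv) = π * (π * πinv) * πinv := by noncomm_ring
      _ = 1 := by rw [hp1, mul_one, hp1]
  calc T (n-1) * (πinv * πinv)
      = ((πinv * πinv) * π ^ 2) * T (n-1) * (πinv * πinv) := by rw [hQP, one_mul]
    _ = (πinv * πinv) * (π ^ 2 * T (n-1)) * (πinv * πinv) := by noncomm_ring
    _ = (πinv * πinv) * (T 1 * π ^ 2) * (πinv * πinv) := by rw [h3]
    _ = (πinv * πinv) * T 1 * (π ^ 2 * (πinv * πinv)) := by noncomm_ring
    _ = (πinv * πinv) * T 1 := by rw [hPQ, mul_one]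

end daha

/-- `Y_i := T_i ⋯ T_{n-1} π⁻¹ T_1⁻¹ ⋯ T_{i-1}⁻¹` in the DAHA (1-indexed). -/
def dahaY {A : Type*} [Ring A] (T Tinv : ℕ → A) (πinv : A) (n i : ℕ) : A :=
  ((List.range' i (n - i)).map T).prod * πinv * ((List.range' 1 (i - 1)).map Tinv).prod

/-- In the `GL_n` DAHA (presentation with generators `T_i`, `X_j^{±1}`, `π^{±1}`),
the elements `Y_i = T_i ⋯ T_{n-1} π⁻¹ T_1⁻¹ ⋯ T_{i-1}⁻¹` pairwise commute. -/
theorem daha_Y_commute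
    {K : Type*} [Field K] {A : Type*} [Ring A] [Algebra K A]
    (n : ℕ) (q t : K) (hq : q ≠ 0) (ht : t ≠ 0)
    (T Tinv X Xinv : ℕ → A) (π πinv : A)
    (hTinv : ∀ i, 1 ≤ i → i ≤ n - 1 → T i * Tinv i = 1 ∧ Tinv i * T i = 1)
    (hquad : ∀ i, 1 ≤ i → i ≤ n - 1 →
      (T i - algebraMap K A t) * (T i + algebraMap K A t⁻¹) = 0)
    (hbraid : ∀ i, 1 ≤ i → i + 1 ≤ n - 1 →
      T i * T (i + 1) * T i = T (i + 1) * T i * T (i + 1))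
    (hTcomm : ∀ i j, 1 ≤ i → i + 2 ≤ j → j ≤ n - 1 → T i * T j = T j * T i)
    (hXinv : ∀ j, 1 ≤ j → j ≤ n → X j * Xinv j = 1 ∧ Xinv j * X j = 1)
    (hXcomm : ∀ i j, 1 ≤ i → i ≤ n → 1 ≤ j → j ≤ n → X i * X j = X j * X i)
    (hTXT : ∀ i, 1 ≤ i → i ≤ n - 1 → T i * X i * T i = X (i + 1))
    (hTX : ∀ i j, 1 ≤ i → i ≤ n - 1 → 1 ≤ j → j ≤ n → j ≠ i → j ≠ i + 1 →
      T i * X j = X j * T i)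
    (hπinv : π * πinv = 1 ∧ πinv * π = 1)
    (hπT : ∀ i, 1 ≤ i → i + 1 ≤ n - 1 → π * T i = T (i + 1) * π)
    (hπnT : ∀ i, 1 ≤ i → i ≤ n - 1 → π ^ n * T i = T i * π ^ n)
    (hπX : ∀ i, 1 ≤ i → i + 1 ≤ n → π * X i = X (i + 1) * π)
    (hπXn : π * X n = ((q ^ 2)⁻¹ : K) • (X 1 * π)) :
    ∀ i j, 1 ≤ i → i ≤ n → 1 ≤ j → j ≤ n →
      dahaY T Tinv πinv n i * dahaY T Tinv πinv n j
        = dahaY T Tinv πinv n j * dahaY T Tinv πinv n i := by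
  obtain ⟨hp1, hp2⟩ := hπinv
  have hYdef : ∀ i, dahaY T Tinv πinv n i
      = dahaProd T i (n-i) * πinv * dahaProd Tinv 1 (i-1) := fun i => rfl
  have hTP : ∀ m, 1 ≤ m → m + 1 ≤ n - 1 → T m * πinv = πinv * T (m+1) := by
    intro m h1 h2
    have h := hπT m h1 h2
    calc T m * πinv = (πinv * π) * T m * πinv := by rw [hp2, one_mul]
      _ = πinv * (π * T m) * πinv := by noncomm_ring
      _ = πinv * (T (m+1) * π) * πinv := by rw [h]
      _ = πinv * T (m+1) * (π * πinv) := by noncomm_ring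
      _ = πinv * T (m+1) := by rw [hp1, mul_one]
  have hTPinv : ∀ m, 1 ≤ m → m + 1 ≤ n - 1 → πinv * Tinv (m+1) = Tinv m * πinv := by
    intro m h1 h2
    have h := hTP m h1 h2
    have u1 := hTinv m h1 (by omega)
    have u2 := hTinv (m+1) (by omega) h2
    calc πinv * Tinv (m+1) = (Tinv m * T m) * πinv * Tinv (m+1) := by rw [u1.2, one_mul]
      _ = Tinv m * (T m * πinv) * Tinv (m+1) := by noncomm_ring
      _ = Tinv m * (πinv * T (m+1)) * Tinv (m+1) := by rw [h]
      _ = Tinv m * πinv * (T (m+1) * Tinv (m+1)) := by noncomm_ring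
      _ = Tinv m * πinv := by rw [u2.1, mul_one]
  have hTQ : ∀ k i, i + 1 ≤ k → k ≤ n - 1 →
      T k * dahaProd Tinv 1 (i-1) = dahaProd Tinv 1 (i-1) * T k := by
    intro k i hik hk
    refine commute_dahaProd Tinv (T k) (i-1) 1 (fun x hx hx' => ?_)
    have ux := hTinv x hx (by omega)
    exact commute_of_inv ((hTcomm x k hx (by omega) hk).symm) ux.1 ux.2
  have hYT : ∀ i k, 1 ≤ i → i ≤ n → i + 1 ≤ k → k ≤ n - 1 →
      T k * dahaY T Tinv πinv n i = dahaY T Tinv πinv n i * T k := by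
    intro i k hi hin hik hk
    have s1 : T k * dahaProd T i (n-i) = dahaProd T i (n-i) * T (k-1) := by
      have := daha_slide n T hbraid hTcomm (n-i) i (k-1) hi (by omega) (by omega) (by omega)
      rwa [show k - 1 + 1 = k from by omega] at this
    have s2 : T (k-1) * πinv = πinv * T k := by
      have := hTP (k-1) (by omega) (by omega)
      rwa [show k - 1 + 1 = k from by omega] at this
    have s3 := hTQ k i hik hk
    rw [hYdef]
    calc T k * (dahaProd T i (n-i) * πinv * dahaProd Tinv 1 (i-1))
        = (T k * dahaProd T i (n-i)) * πinv * dahaProd Tinv 1 (i-1) := by noncomm_ring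
      _ = dahaProd T i (n-i) * (T (k-1) * πinv) * dahaProd Tinv 1 (i-1) := by
          rw [s1]; noncomm_ring
      _ = dahaProd T i (n-i) * (πinv * T k) * dahaProd Tinv 1 (i-1) := by rw [s2]
      _ = dahaProd T i (n-i) * πinv * (T k * dahaProd Tinv 1 (i-1)) := by noncomm_ring
      _ = dahaProd T i (n-i) * πinv * dahaProd Tinv 1 (i-1) * T k := by
          rw [s3]; noncomm_ring
  have hYstep : ∀ m, 1 ≤ m → m + 1 ≤ n →
      dahaY T Tinv πinv n (m+1) = Tinv m * dahaY T Tinv πinv n m * Tinv m := by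
    intro m hm hmn
    have um := hTinv m hm (by omega)
    have e1 : dahaProd T m (n-m) = T m * dahaProd T (m+1) (n-(m+1)) := by
      rw [show n - m = (n - (m+1)) + 1 from by omega, dahaProd_succ_left]
    have e2 : dahaProd Tinv 1 (m+1-1) = dahaProd Tinv 1 (m-1) * Tinv m := by
      rw [show m + 1 - 1 = (m-1) + 1 from by omega, dahaProd_succ_right,
        show 1 + (m-1) = m from by omega]
    rw [hYdef, hYdef, e1, e2]
    refine Eq.symm ?_
    calc Tinv m * (T m * dahaProd T (m+1) (n-(m+1)) * πinv * dahaProd Tinv 1 (m-1)) * Tinv m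
        = (Tinv m * T m) * (dahaProd T (m+1) (n-(m+1)) * πinv
            * (dahaProd Tinv 1 (m-1) * Tinv m)) := by noncomm_ring
      _ = dahaProd T (m+1) (n-(m+1)) * πinv * (dahaProd Tinv 1 (m-1) * Tinv m) := by
          rw [um.2, one_mul]
  have hYadj : ∀ i, 1 ≤ i → i + 1 ≤ n →
      dahaY T Tinv πinv n i * dahaY T Tinv πinv n (i+1)
        = dahaY T Tinv πinv n (i+1) * dahaY T Tinv πinv n i := by
    intro i hi hin
    have ui := hTinv i hi (by omega)
    have hQi : dahaProd Tinv 1 (i+1-1) = dahaProd Tinv 1 (i-1) * Tinv i := by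
      rw [show i + 1 - 1 = (i-1) + 1 from by omega, dahaProd_succ_right,
        show 1 + (i-1) = i from by omega]
    have f1 : dahaProd Tinv 1 (i+1-1) * T i = dahaProd Tinv 1 (i-1) := by
      rw [hQi, mul_assoc, ui.2, mul_one]
    have f2 : dahaProd Tinv 1 (i-1) * dahaProd T (i+1) (n-(i+1))
        = dahaProd T (i+1) (n-(i+1)) * dahaProd Tinv 1 (i-1) := by
      refine dahaProd_commute_dahaProd Tinv T (fun x m hx hx' hm hm' => ?_)
      have ux := hTinv x hx (by omega)
      exact (commute_of_inv (hTcomm x m hx (by omega) (by omega)).symm ux.1 ux.2).symm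
    have f3 : πinv * dahaProd T (i+1) (n-(i+1)) = dahaProd T i (n-(i+1)) * πinv :=
      daha_pishift n πinv T (fun m h1 h2 => (hTP m h1 h2).symm) (n-(i+1)) i hi (by omega)
    have f4 : dahaProd Tinv 1 (i-1) * πinv = πinv * dahaProd Tinv 2 (i-1) := by
      have := daha_pishift n πinv Tinv hTPinv (i-1) 1 (by omega) (by omega)
      rw [show (1:ℕ)+1 = 2 from rfl] at this
      exact this.symm
    have hNval : dahaY T Tinv πinv n (i+1) * T i * dahaY T Tinv πinv n (i+1)
        = (dahaProd T (i+1) (n-(i+1)) * dahaProd T i (n-(i+1))) * (πinv * πinv)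
          * (dahaProd Tinv 2 (i-1) * dahaProd Tinv 1 (i+1-1)) := by
      rw [hYdef]
      calc dahaProd T (i+1) (n-(i+1)) * πinv * dahaProd Tinv 1 (i+1-1) * T i
            * (dahaProd T (i+1) (n-(i+1)) * πinv * dahaProd Tinv 1 (i+1-1))
          = dahaProd T (i+1) (n-(i+1)) * πinv * (dahaProd Tinv 1 (i+1-1) * T i)
            * (dahaProd T (i+1) (n-(i+1)) * πinv * dahaProd Tinv 1 (i+1-1)) := by
            noncomm_ring
        _ = dahaProd T (i+1) (n-(i+1)) * πinv
            * (dahaProd Tinv 1 (i-1) * dahaProd T (i+1) (n-(i+1)))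
            * (πinv * dahaProd Tinv 1 (i+1-1)) := by rw [f1]; noncomm_ring
        _ = dahaProd T (i+1) (n-(i+1)) * πinv
            * (dahaProd T (i+1) (n-(i+1)) * dahaProd Tinv 1 (i-1))
            * (πinv * dahaProd Tinv 1 (i+1-1)) := by rw [f2]
        _ = dahaProd T (i+1) (n-(i+1)) * (πinv * dahaProd T (i+1) (n-(i+1)))
            * ((dahaProd Tinv 1 (i-1) * πinv) * dahaProd Tinv 1 (i+1-1)) := by
            noncomm_ring
        _ = dahaProd T (i+1) (n-(i+1)) * (dahaProd T i (n-(i+1)) * πinv)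
            * ((πinv * dahaProd Tinv 2 (i-1)) * dahaProd Tinv 1 (i+1-1)) := by
            rw [f3, f4]
        _ = (dahaProd T (i+1) (n-(i+1)) * dahaProd T i (n-(i+1))) * (πinv * πinv)
            * (dahaProd Tinv 2 (i-1) * dahaProd Tinv 1 (i+1-1)) := by noncomm_ring
    have tD : T i * (dahaProd T (i+1) (n-(i+1)) * dahaProd T i (n-(i+1)))
        = (dahaProd T (i+1) (n-(i+1)) * dahaProd T i (n-(i+1))) * T (n-1) :=
      daha_D n T hbraid hTcomm (n-(i+1)) i hi (by omega)
    have tP : T (n-1) * (πinv * πinv) = (πinv * πinv) * T 1 :=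
      daha_PP n T π πinv ⟨hp1, hp2⟩ hπT hπnT (by omega)
    have tE : T 1 * (dahaProd Tinv 2 (i-1) * dahaProd Tinv 1 (i+1-1))
        = (dahaProd Tinv 2 (i-1) * dahaProd Tinv 1 (i+1-1)) * T i := by
      have hE := daha_E n T Tinv hTinv hbraid hTcomm (i-1) (by omega)
      rw [show (i-1) + 1 = i from by omega] at hE
      have l1 : T 1 * (dahaProd Tinv 2 (i-1) * dahaProd Tinv 1 (i+1-1))
          = dahaProd Tinv 2 (i-1) * dahaProd Tinv 1 (i-1) := by
        rw [hQi]
        calc T 1 * (dahaProd Tinv 2 (i-1) * (dahaProd Tinv 1 (i-1) * Tinv i))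
            = (T 1 * (dahaProd Tinv 2 (i-1) * dahaProd Tinv 1 (i-1))) * Tinv i := by
              noncomm_ring
          _ = ((dahaProd Tinv 2 (i-1) * dahaProd Tinv 1 (i-1)) * T i) * Tinv i := by
              rw [hE]
          _ = (dahaProd Tinv 2 (i-1) * dahaProd Tinv 1 (i-1)) * (T i * Tinv i) := by
              rw [mul_assoc]
          _ = dahaProd Tinv 2 (i-1) * dahaProd Tinv 1 (i-1) := by rw [ui.1, mul_one]
      have l2 : (dahaProd Tinv 2 (i-1) * dahaProd Tinv 1 (i+1-1)) * T i
          = dahaProd Tinv 2 (i-1) * dahaProd Tinv 1 (i-1) := by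
        rw [hQi]
        calc dahaProd Tinv 2 (i-1) * (dahaProd Tinv 1 (i-1) * Tinv i) * T i
            = dahaProd Tinv 2 (i-1) * dahaProd Tinv 1 (i-1) * (Tinv i * T i) := by
              noncomm_ring
          _ = dahaProd Tinv 2 (i-1) * dahaProd Tinv 1 (i-1) := by rw [ui.2, mul_one]
      rw [l1, l2]
    have hNcomm : T i * (dahaY T Tinv πinv n (i+1) * T i * dahaY T Tinv πinv n (i+1))
        = (dahaY T Tinv πinv n (i+1) * T i * dahaY T Tinv πinv n (i+1)) * T i := by
      rw [hNval]
      calc T i * ((dahaProd T (i+1) (n-(i+1)) * dahaProd T i (n-(i+1))) * (πinv * πinv)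
            * (dahaProd Tinv 2 (i-1) * dahaProd Tinv 1 (i+1-1)))
          = (T i * (dahaProd T (i+1) (n-(i+1)) * dahaProd T i (n-(i+1)))) * (πinv * πinv)
            * (dahaProd Tinv 2 (i-1) * dahaProd Tinv 1 (i+1-1)) := by noncomm_ring
        _ = (dahaProd T (i+1) (n-(i+1)) * dahaProd T i (n-(i+1))) * (T (n-1)
            * (πinv * πinv)) * (dahaProd Tinv 2 (i-1) * dahaProd Tinv 1 (i+1-1)) := by
            rw [tD]; noncomm_ring
        _ = (dahaProd T (i+1) (n-(i+1)) * dahaProd T i (n-(i+1))) * ((πinv * πinv)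
            * T 1) * (dahaProd Tinv 2 (i-1) * dahaProd Tinv 1 (i+1-1)) := by rw [tP]
        _ = (dahaProd T (i+1) (n-(i+1)) * dahaProd T i (n-(i+1))) * (πinv * πinv)
            * (T 1 * (dahaProd Tinv 2 (i-1) * dahaProd Tinv 1 (i+1-1))) := by
            noncomm_ring
        _ = (dahaProd T (i+1) (n-(i+1)) * dahaProd T i (n-(i+1))) * (πinv * πinv)
            * ((dahaProd Tinv 2 (i-1) * dahaProd Tinv 1 (i+1-1)) * T i) := by rw [tE]
        _ = ((dahaProd T (i+1) (n-(i+1)) * dahaProd T i (n-(i+1))) * (πinv * πinv)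
            * (dahaProd Tinv 2 (i-1) * dahaProd Tinv 1 (i+1-1))) * T i := by
            noncomm_ring
    have hrev : T i * dahaY T Tinv πinv n (i+1) * T i = dahaY T Tinv πinv n i := by
      rw [hYstep i hi hin]
      calc T i * (Tinv i * dahaY T Tinv πinv n i * Tinv i) * T i
          = (T i * Tinv i) * dahaY T Tinv πinv n i * (Tinv i * T i) := by noncomm_ring
        _ = dahaY T Tinv πinv n i := by rw [ui.1, ui.2, one_mul, mul_one]
    calc dahaY T Tinv πinv n i * dahaY T Tinv πinv n (i+1)
        = (T i * dahaY T Tinv πinv n (i+1) * T i) * dahaY T Tinv πinv n (i+1) := by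
          rw [hrev]
      _ = T i * (dahaY T Tinv πinv n (i+1) * T i * dahaY T Tinv πinv n (i+1)) := by
          noncomm_ring
      _ = (dahaY T Tinv πinv n (i+1) * T i * dahaY T Tinv πinv n (i+1)) * T i :=
          hNcomm
      _ = dahaY T Tinv πinv n (i+1) * (T i * dahaY T Tinv πinv n (i+1) * T i) := by
          noncomm_ring
      _ = dahaY T Tinv πinv n (i+1) * dahaY T Tinv πinv n i := by rw [hrev]
  have key : ∀ i, 1 ≤ i → ∀ j, i + 1 ≤ j → j ≤ n →
      dahaY T Tinv πinv n i * dahaY T Tinv πinv n j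
        = dahaY T Tinv πinv n j * dahaY T Tinv πinv n i := by
    intro i hi j hij
    induction j, hij using Nat.le_induction with
    | base => intro hn'; exact hYadj i hi hn'
    | succ j hij ih =>
      intro hjn
      have hYs := hYstep j (by omega) hjn
      have h1 : T j * dahaY T Tinv πinv n i = dahaY T Tinv πinv n i * T j :=
        hYT i j hi (by omega) hij (by omega)
      have uj := hTinv j (by omega) (by omega)
      have h2 : dahaY T Tinv πinv n i * Tinv j = Tinv j * dahaY T Tinv πinv n i :=
        commute_of_inv h1.symm uj.1 uj.2
      have ihe := ih (by omega)
      calc dahaY T Tinv πinv n i * dahaY T Tinv πinv n (j+1)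
          = dahaY T Tinv πinv n i * (Tinv j * dahaY T Tinv πinv n j * Tinv j) := by
            rw [hYs]
        _ = (dahaY T Tinv πinv n i * Tinv j) * (dahaY T Tinv πinv n j * Tinv j) := by
            noncomm_ring
        _ = Tinv j * (dahaY T Tinv πinv n i * dahaY T Tinv πinv n j) * Tinv j := by
            rw [h2]; noncomm_ring
        _ = Tinv j * (dahaY T Tinv πinv n j * dahaY T Tinv πinv n i) * Tinv j := by
            rw [ihe]
        _ = Tinv j * dahaY T Tinv πinv n j * (dahaY T Tinv πinv n i * Tinv j) := by
            noncomm_ring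
        _ = Tinv j * dahaY T Tinv πinv n j * (Tinv j * dahaY T Tinv πinv n i) := by
            rw [h2]
        _ = (Tinv j * dahaY T Tinv πinv n j * Tinv j) * dahaY T Tinv πinv n i := by
            noncomm_ring
        _ = dahaY T Tinv πinv n (j+1) * dahaY T Tinv πinv n i := by rw [hYs]
  intro i j hi hin hj hjn
  rcases lt_trichotomy i j with h | h | h
  · exact key i hi j (by omega) hjn
  · rw [h]
  · exact (key j hj i (by omega) hin).symm
end

section
/- The Demazure–Lusztig operators T_i on K[x_1^{±1},...,x_n^{±1}] satisfy the braid relations: T_i T_{i+1} T_i = T_{i+1} T_i T_{i+1} for 1 ≤ i ≤ n-2, and T_i T_j = T_j T_i for |i - j| ≥ 2. -/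
/-- The field of rational functions in the variables `x_0, x_1, …` over `K`. -/
noncomputable abbrev RatFieldN (K : Type*) [Field K] : Type _ :=
  FractionRing (MvPolynomial ℕ K)

/-- The variable `x_j`, viewed in the rational function field. -/
noncomputable def xVar (K : Type*) [Field K] (j : ℕ) : RatFieldN K :=
  algebraMap (MvPolynomial ℕ K) (RatFieldN K) (MvPolynomial.X j)

/-- A constant `c ∈ K`, viewed in the rational function field. -/
noncomputable def cConst (K : Type*) [Field K] (c : K) : RatFieldN K :=
  algebraMap (MvPolynomial ℕ K) (RatFieldN K) (MvPolynomial.C c)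

/-- The Demazure–Lusztig operator
`T_i f = t (s_i f) + (t - t⁻¹) (s_i f - f)/(x_i/x_{i+1} - 1)`,
where `σ` is the ring map induced by the transposition `s_i` of `x_i` and `x_{i+1}`. -/
noncomputable def demLusztig {K : Type*} [Field K] (t : K)
    (σ : RatFieldN K →+* RatFieldN K) (i : ℕ) (f : RatFieldN K) : RatFieldN K :=
  cConst K t * σ f + cConst K (t - t⁻¹) * (σ f - f) / (xVar K i / xVar K (i + 1) - 1)


noncomputable def cHom (K : Type*) [Field K] : K →+* RatFieldN K :=
  (algebraMap (MvPolynomial ℕ K) (RatFieldN K)).comp MvPolynomial.C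

lemma cConst_eq {K : Type*} [Field K] (c : K) : cConst K c = cHom K c := rfl

lemma cConst_sub_inv {K : Type*} [Field K] (t : K) :
    cConst K (t - t⁻¹) = cConst K t - (cConst K t)⁻¹ := by
  simp [cConst_eq, map_sub, map_inv₀]

lemma cConst_ne_zero {K : Type*} [Field K] {t : K} (ht : t ≠ 0) : cConst K t ≠ 0 := by
  rw [cConst_eq, map_ne_zero_iff _ (RingHom.injective (cHom K))]
  exact ht

lemma xVar_ne_zero {K : Type*} [Field K] (j : ℕ) : xVar K j ≠ 0 := by
  simp only [xVar]
  rw [map_ne_zero_iff _ (IsFractionRing.injective (MvPolynomial ℕ K) (RatFieldN K))]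
  exact MvPolynomial.X_ne_zero j

lemma xVar_ne {K : Type*} [Field K] {j k : ℕ} (h : j ≠ k) : xVar K j ≠ xVar K k := by
  simp only [xVar]
  intro hh
  exact h (MvPolynomial.X_injective (IsFractionRing.injective (MvPolynomial ℕ K) (RatFieldN K) hh))

lemma demLusztig_eq {K : Type*} [Field K] (t : K) (ht : t ≠ 0)
    (σ : RatFieldN K →+* RatFieldN K) (i : ℕ) (f : RatFieldN K) :
    demLusztig t σ i f =
      (cConst K t * cConst K t * (xVar K i - xVar K (i+1)) * σ f
        + (cConst K t * cConst K t - 1) * xVar K (i+1) * (σ f - f))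
        / (cConst K t * (xVar K i - xVar K (i+1))) := by
  rw [demLusztig, cConst_sub_inv]
  have hB := xVar_ne_zero (K := K) (i+1)
  have hAB : xVar K i ≠ xVar K (i+1) := xVar_ne (by omega)
  have hu := cConst_ne_zero (K := K) ht
  have h1 : xVar K i / xVar K (i+1) - 1 ≠ 0 := by
    rw [sub_ne_zero]; intro h; exact hAB ((div_eq_one_iff_eq hB).mp h)
  have h2 : xVar K i - xVar K (i+1) ≠ 0 := sub_ne_zero.mpr hAB
  field_simp

lemma homExt {K : Type*} [Field K] (φ ψ : RatFieldN K →+* RatFieldN K)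
    (hx : ∀ j, φ (xVar K j) = ψ (xVar K j))
    (hc : ∀ c : K, φ (cConst K c) = ψ (cConst K c)) : φ = ψ := by
  apply IsLocalization.ringHom_ext (nonZeroDivisors (MvPolynomial ℕ K))
  apply MvPolynomial.ringHom_ext
  · intro c; exact hc c
  · intro j; exact hx j

section Keys
variable {F : Type*} [Field F]

lemma vdiv (v x y : F) (hy : y ≠ 0) : v / (x / y - 1) = v * y / (x - y) := by
  rw [show x / y - 1 = (x - y) / y from by field_simp, div_div_eq_mul_div]

set_option maxHeartbeats 4000000 in
lemma key4 (u v a b c : F) (ha : a ≠ 0) (hb : b ≠ 0) (hc : c ≠ 0)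
    (hab : a ≠ b) (hbc : b ≠ c) (hac : a ≠ c) :
    (((u)+(v / (a / b - 1)))*(v / (a / c - 1))*(v / (b / a - 1)) + (v / (a / b - 1))*(v / (b / c - 1))*((u)+(v / (a / b - 1)))) = ((v / (b / c - 1))*((u)+(v / (a / b - 1)))*(v / (a / c - 1))) := by
  simp only [vdiv _ a b hb, vdiv _ b a ha, vdiv _ b c hc, vdiv _ c b hb, vdiv _ a c hc]
  have d1 : a - b ≠ 0 := sub_ne_zero.mpr hab
  have d2 : b - a ≠ 0 := sub_ne_zero.mpr hab.symm
  have d3 : b - c ≠ 0 := sub_ne_zero.mpr hbc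
  have d4 : c - b ≠ 0 := sub_ne_zero.mpr hbc.symm
  have d5 : a - c ≠ 0 := sub_ne_zero.mpr hac
  field_simp
  ring

set_option maxHeartbeats 4000000 in
lemma key5 (u v a b c : F) (ha : a ≠ 0) (hb : b ≠ 0) (hc : c ≠ 0)
    (hab : a ≠ b) (hbc : b ≠ c) (hac : a ≠ c) :
    ((v / (a / b - 1))*((u)+(v / (b / c - 1)))*(v / (a / c - 1))) = (((u)+(v / (b / c - 1)))*(v / (a / c - 1))*(v / (c / b - 1)) + (v / (b / c - 1))*(v / (a / b - 1))*((u)+(v / (b / c - 1)))) := by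
  simp only [vdiv _ a b hb, vdiv _ b a ha, vdiv _ b c hc, vdiv _ c b hb, vdiv _ a c hc]
  have d1 : a - b ≠ 0 := sub_ne_zero.mpr hab
  have d2 : b - a ≠ 0 := sub_ne_zero.mpr hab.symm
  have d3 : b - c ≠ 0 := sub_ne_zero.mpr hbc
  have d4 : c - b ≠ 0 := sub_ne_zero.mpr hbc.symm
  have d5 : a - c ≠ 0 := sub_ne_zero.mpr hac
  field_simp
  ring

set_option maxHeartbeats 4000000 in
lemma key6 (u v a b c : F) (ha : a ≠ 0) (hb : b ≠ 0) (hc : c ≠ 0)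
    (hab : a ≠ b) (hbc : b ≠ c) (hac : a ≠ c) :
    (-(((u)+(v / (a / b - 1)))*(v / (a / c - 1))*((u)+(v / (b / a - 1)))) - (v / (a / b - 1))*(v / (b / c - 1))*(v / (a / b - 1))) = (-(((u)+(v / (b / c - 1)))*(v / (a / c - 1))*((u)+(v / (c / b - 1)))) - (v / (b / c - 1))*(v / (a / b - 1))*(v / (b / c - 1))) := by
  simp only [vdiv _ a b hb, vdiv _ b a ha, vdiv _ b c hc, vdiv _ c b hb, vdiv _ a c hc]
  have d1 : a - b ≠ 0 := sub_ne_zero.mpr hab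
  have d2 : b - a ≠ 0 := sub_ne_zero.mpr hab.symm
  have d3 : b - c ≠ 0 := sub_ne_zero.mpr hbc
  have d4 : c - b ≠ 0 := sub_ne_zero.mpr hbc.symm
  have d5 : a - c ≠ 0 := sub_ne_zero.mpr hac
  field_simp
  ring


end Keys

section Main
variable {K : Type*} [Field K] (σ : ℕ → (RatFieldN K →+* RatFieldN K))
  (hσx : ∀ i j, σ i (xVar K j) = xVar K (Equiv.swap i (i + 1) j))
  (hσc : ∀ i (c : K), σ i (cConst K c) = cConst K c)

include hσx hσc

lemma sigma_invol (i : ℕ) : ∀ g, σ i (σ i g) = g := by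
  have : (σ i).comp (σ i) = RingHom.id _ := by
    apply homExt
    · intro j
      simp [RingHom.comp_apply, hσx, Equiv.swap_apply_self]
    · intro c; simp [RingHom.comp_apply, hσc]
  intro g
  exact congrArg (fun φ => φ g) this |>.trans rfl

set_option maxHeartbeats 1000000 in
lemma sigma_braid (i : ℕ) :
    ∀ g, σ (i+1) (σ i (σ (i+1) g)) = σ i (σ (i+1) (σ i g)) := by
  have : ((σ (i+1)).comp ((σ i).comp (σ (i+1)))) = ((σ i).comp ((σ (i+1)).comp (σ i))) := by
    apply homExt
    · intro j
      simp only [RingHom.comp_apply, hσx]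
      congr 1
      simp only [Equiv.swap_apply_def]
      split_ifs <;> omega
    · intro c; simp [RingHom.comp_apply, hσc]
  intro g
  exact congrArg (fun φ => φ g) this

set_option maxHeartbeats 1000000 in
lemma sigma_comm {i j : ℕ} (h : i + 2 ≤ j) :
    ∀ g, σ i (σ j g) = σ j (σ i g) := by
  have : (σ i).comp (σ j) = (σ j).comp (σ i) := by
    apply homExt
    · intro k
      simp only [RingHom.comp_apply, hσx]
      congr 1
      simp only [Equiv.swap_apply_def]
      split_ifs <;> omega
    · intro c; simp [RingHom.comp_apply, hσc]
  intro g
  exact congrArg (fun φ => φ g) this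

end Main

set_option maxHeartbeats 8000000 in
set_option synthInstance.maxHeartbeats 1000000 in
/-- The Demazure–Lusztig operators satisfy the braid relations:
`T_i T_{i+1} T_i = T_{i+1} T_i T_{i+1}`, and `T_i T_j = T_j T_i` for `|i - j| ≥ 2`. -/
theorem demazure_lusztig_braid
    {K : Type*} [Field K] (n : ℕ) (t : K) (ht : t ≠ 0)
    (σ : ℕ → (RatFieldN K →+* RatFieldN K))
    (hσx : ∀ i j, σ i (xVar K j) = xVar K (Equiv.swap i (i + 1) j))
    (hσc : ∀ i (c : K), σ i (cConst K c) = cConst K c) :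
    (∀ i, i + 2 < n → ∀ f : RatFieldN K,
      demLusztig t (σ i) i (demLusztig t (σ (i + 1)) (i + 1) (demLusztig t (σ i) i f))
        = demLusztig t (σ (i + 1)) (i + 1)
            (demLusztig t (σ i) i (demLusztig t (σ (i + 1)) (i + 1) f)))
    ∧ (∀ i j, i + 2 ≤ j → j + 1 < n → ∀ f : RatFieldN K,
      demLusztig t (σ i) i (demLusztig t (σ j) j f)
        = demLusztig t (σ j) j (demLusztig t (σ i) i f)) := by
  constructor
  · intro i _ f
    have e1 : σ i (xVar K i) = xVar K (i+1) := by
      rw [hσx]; congr 1; exact Equiv.swap_apply_left _ _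
    have e2 : σ i (xVar K (i+1)) = xVar K i := by
      rw [hσx]; congr 1; exact Equiv.swap_apply_right _ _
    have e3 : σ i (xVar K (i+1+1)) = xVar K (i+1+1) := by
      rw [hσx]; congr 1; exact Equiv.swap_apply_of_ne_of_ne (by omega) (by omega)
    have e4 : σ (i+1) (xVar K i) = xVar K i := by
      rw [hσx]; congr 1; exact Equiv.swap_apply_of_ne_of_ne (by omega) (by omega)
    have e5 : σ (i+1) (xVar K (i+1)) = xVar K (i+1+1) := by
      rw [hσx]; congr 1; exact Equiv.swap_apply_left _ _
    have e6 : σ (i+1) (xVar K (i+1+1)) = xVar K (i+1) := by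
      rw [hσx]; congr 1; exact Equiv.swap_apply_right _ _
    have hinv1 := sigma_invol σ hσx hσc i
    have hinv2 := sigma_invol σ hσx hσc (i+1)
    have hbr := sigma_braid σ hσx hσc i
    have hL : demLusztig t (σ i) i (demLusztig t (σ (i + 1)) (i + 1) (demLusztig t (σ i) i f))
        = ((cConst K t+((cConst K t - (cConst K t)⁻¹) / (xVar K i / xVar K (i+1) - 1)))*((cConst K t)+((cConst K t - (cConst K t)⁻¹) / (xVar K i / xVar K (i+1+1) - 1)))*((cConst K t)+((cConst K t - (cConst K t)⁻¹) / (xVar K (i+1) / xVar K (i+1+1) - 1)))) * (σ i (σ (i+1) (σ i f))) + (-(((cConst K t)+((cConst K t - (cConst K t)⁻¹) / (xVar K i / xVar K (i+1) - 1)))*((cConst K t)+((cConst K t - (cConst K t)⁻¹) / (xVar K i / xVar K (i+1+1) - 1)))*((cConst K t - (cConst K t)⁻¹) / (xVar K (i+1) / xVar K (i+1+1) - 1)))) * (σ i (σ (i+1) f)) + (-(((cConst K t - (cConst K t)⁻¹) / (xVar K i / xVar K (i+1) - 1))*((cConst K t)+((cConst K t - (cConst K t)⁻¹) / (xVar K (i+1)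 / xVar K (i+1+1) - 1)))*((cConst K t)+((cConst K t - (cConst K t)⁻¹) / (xVar K i / xVar K (i+1+1) - 1))))) * (σ (i+1) (σ i f)) + (((cConst K t)+((cConst K t - (cConst K t)⁻¹) / (xVar K i / xVar K (i+1) - 1)))*((cConst K t - (cConst K t)⁻¹) / (xVar K i / xVar K (i+1+1) - 1))*((cConst K t - (cConst K t)⁻¹) / (xVar K (i+1) / xVar K i - 1)) + ((cConst K t - (cConst K t)⁻¹) / (xVar K i / xVar K (i+1) - 1))*((cConst K t - (cConst K t)⁻¹) / (xVar K (i+1) / xVar K (i+1+1) - 1))*((cConst K t)+((cConst K t - (cConst K t)⁻¹) / (xVar K i / xVar K (i+1) - 1)))) * (σ i f) + (((cConst K t - (cConst K t)⁻¹) / (xVar K i / xVar K (i+1) - 1))*((cConst K t)+((cConst K t - (cConst K t)⁻¹) / (xVar K (i+1) / xVar K (i+1+1) - 1)))*((cConst K t - (cConst K t)⁻¹) / (xVar K i / xVar K (i+1+1) - 1))) * (σ (i+1) f) + (-(((cConst K t)+((cConst K t - (cConst K t)⁻¹) / (xVar K i / xVar K (i+1) - 1)))*((cConst K t - (cConst K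 t)⁻¹) / (xVar K i / xVar K (i+1+1) - 1))*((cConst K t)+((cConst K t - (cConst K t)⁻¹) / (xVar K (i+1) / xVar K i - 1)))) - ((cConst K t - (cConst K t)⁻¹) / (xVar K i / xVar K (i+1) - 1))*((cConst K t - (cConst K t)⁻¹) / (xVar K (i+1) / xVar K (i+1+1) - 1))*((cConst K t - (cConst K t)⁻¹) / (xVar K i / xVar K (i+1) - 1))) * f := by
      simp only [demLusztig, map_add, map_mul, map_sub, map_div₀, map_inv₀, map_one, hσc,
        e1, e2, e3, e4, e5, e6, hinv1, hinv2, hbr, cConst_sub_inv]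
      ring
    have hR : demLusztig t (σ (i + 1)) (i + 1)
          (demLusztig t (σ i) i (demLusztig t (σ (i + 1)) (i + 1) f))
        = ((cConst K t+((cConst K t - (cConst K t)⁻¹) / (xVar K i / xVar K (i+1) - 1)))*((cConst K t)+((cConst K t - (cConst K t)⁻¹) / (xVar K i / xVar K (i+1+1) - 1)))*((cConst K t)+((cConst K t - (cConst K t)⁻¹) / (xVar K (i+1) / xVar K (i+1+1) - 1)))) * (σ i (σ (i+1) (σ i f))) + (-(((cConst K t)+((cConst K t - (cConst K t)⁻¹) / (xVar K i / xVar K (i+1) - 1)))*((cConst K t)+((cConst K t - (cConst K t)⁻¹) / (xVar K i / xVar K (i+1+1) - 1)))*((cConst K t - (cConst K t)⁻¹) / (xVar K (i+1) / xVar K (i+1+1) - 1)))) * (σ i (σ (i+1) f)) + (-(((cConst K t - (cConst K t)⁻¹) / (xVar K i / xVar K (i+1) - 1))*((cConst K t)+((cConst K t - (cConst K t)⁻¹) / (xVar K (i+1) / xVar K (i+1+1) - 1)))*((cConst K t)+((cConst K t - (cConst K t)⁻¹) / (xVar K i / xVar K (i+1+1) - 1))))) * (σ (i+1) (σ i f))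 + (((cConst K t - (cConst K t)⁻¹) / (xVar K (i+1) / xVar K (i+1+1) - 1))*((cConst K t)+((cConst K t - (cConst K t)⁻¹) / (xVar K i / xVar K (i+1) - 1)))*((cConst K t - (cConst K t)⁻¹) / (xVar K i / xVar K (i+1+1) - 1))) * (σ i f) + (((cConst K t)+((cConst K t - (cConst K t)⁻¹) / (xVar K (i+1) / xVar K (i+1+1) - 1)))*((cConst K t - (cConst K t)⁻¹) / (xVar K i / xVar K (i+1+1) - 1))*((cConst K t - (cConst K t)⁻¹) / (xVar K (i+1+1) / xVar K (i+1) - 1)) + ((cConst K t - (cConst K t)⁻¹) / (xVar K (i+1) / xVar K (i+1+1) - 1))*((cConst K t - (cConst K t)⁻¹) / (xVar K i / xVar K (i+1) - 1))*((cConst K t)+((cConst K t - (cConst K t)⁻¹) / (xVar K (i+1) / xVar K (i+1+1) - 1)))) * (σ (i+1) f) + (-(((cConst K t)+((cConst K t - (cConst K t)⁻¹) / (xVar K (i+1) / xVar K (i+1+1) - 1)))*((cConst K t - (cConst K t)⁻¹) / (xVar K i / xVar K (i+1+1) - 1))*((cConst K t)+((cConst K t - (cConst K t)⁻¹) / (xVar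 K (i+1+1) / xVar K (i+1) - 1)))) - ((cConst K t - (cConst K t)⁻¹) / (xVar K (i+1) / xVar K (i+1+1) - 1))*((cConst K t - (cConst K t)⁻¹) / (xVar K i / xVar K (i+1) - 1))*((cConst K t - (cConst K t)⁻¹) / (xVar K (i+1) / xVar K (i+1+1) - 1))) * f := by
      simp only [demLusztig, map_add, map_mul, map_sub, map_div₀, map_inv₀, map_one, hσc,
        e1, e2, e3, e4, e5, e6, hinv1, hinv2, hbr, cConst_sub_inv]
      ring
    have h4 : (((cConst K t)+((cConst K t - (cConst K t)⁻¹) / (xVar K i / xVar K (i+1) - 1)))*((cConst K t - (cConst K t)⁻¹) / (xVar K i / xVar K (i+1+1) - 1))*((cConst K t - (cConst K t)⁻¹) / (xVar K (i+1) / xVar K i - 1)) + ((cConst K t - (cConst K t)⁻¹) / (xVar K i / xVar K (i+1) - 1))*((cConst K t - (cConst K t)⁻¹) / (xVar K (i+1) / xVar K (i+1+1) - 1))*((cConst K t)+((cConst K t - (cConst K t)⁻¹) / (xVar K i / xVar K (i+1) - 1)))) = (((cConst K t - (cConst K t)⁻¹) / (xVar K (i+1) / xVar K (i+1+1) - 1))*((cConst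 K t)+((cConst K t - (cConst K t)⁻¹) / (xVar K i / xVar K (i+1) - 1)))*((cConst K t - (cConst K t)⁻¹) / (xVar K i / xVar K (i+1+1) - 1))) := key4 (cConst K t) (cConst K t - (cConst K t)⁻¹) (xVar K i) (xVar K (i+1)) (xVar K (i+1+1)) (xVar_ne_zero i) (xVar_ne_zero (i+1)) (xVar_ne_zero (i+1+1)) (xVar_ne (by omega)) (xVar_ne (by omega)) (xVar_ne (by omega))
    have h5 : (((cConst K t - (cConst K t)⁻¹) / (xVar K i / xVar K (i+1) - 1))*((cConst K t)+((cConst K t - (cConst K t)⁻¹) / (xVar K (i+1) / xVar K (i+1+1) - 1)))*((cConst K t - (cConst K t)⁻¹) / (xVar K i / xVar K (i+1+1) - 1))) = (((cConst K t)+((cConst K t - (cConst K t)⁻¹) / (xVar K (i+1) / xVar K (i+1+1) - 1)))*((cConst K t - (cConst K t)⁻¹) / (xVar K i / xVar K (i+1+1) - 1))*((cConst K t - (cConst K t)⁻¹) / (xVar K (i+1+1) / xVar K (i+1) - 1)) + ((cConst K t - (cConst K t)⁻¹) / (xVar K (i+1) / xVar K (i+1+1) - 1))*((cConst K t - (cConst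 K t)⁻¹) / (xVar K i / xVar K (i+1) - 1))*((cConst K t)+((cConst K t - (cConst K t)⁻¹) / (xVar K (i+1) / xVar K (i+1+1) - 1)))) := key5 (cConst K t) (cConst K t - (cConst K t)⁻¹) (xVar K i) (xVar K (i+1)) (xVar K (i+1+1)) (xVar_ne_zero i) (xVar_ne_zero (i+1)) (xVar_ne_zero (i+1+1)) (xVar_ne (by omega)) (xVar_ne (by omega)) (xVar_ne (by omega))
    have h6 : (-(((cConst K t)+((cConst K t - (cConst K t)⁻¹) / (xVar K i / xVar K (i+1) - 1)))*((cConst K t - (cConst K t)⁻¹) / (xVar K i / xVar K (i+1+1) - 1))*((cConst K t)+((cConst K t - (cConst K t)⁻¹) / (xVar K (i+1) / xVar K i - 1)))) - ((cConst K t - (cConst K t)⁻¹) / (xVar K i / xVar K (i+1) - 1))*((cConst K t - (cConst K t)⁻¹) / (xVar K (i+1) / xVar K (i+1+1) - 1))*((cConst K t - (cConst K t)⁻¹) / (xVar K i / xVar K (i+1) - 1))) = (-(((cConst K t)+((cConst K t - (cConst K t)⁻¹) / (xVar K (i+1) / xVar K (i+1+1) - 1)))*((cConst K t - (cConst K t)⁻¹)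 / (xVar K i / xVar K (i+1+1) - 1))*((cConst K t)+((cConst K t - (cConst K t)⁻¹) / (xVar K (i+1+1) / xVar K (i+1) - 1)))) - ((cConst K t - (cConst K t)⁻¹) / (xVar K (i+1) / xVar K (i+1+1) - 1))*((cConst K t - (cConst K t)⁻¹) / (xVar K i / xVar K (i+1) - 1))*((cConst K t - (cConst K t)⁻¹) / (xVar K (i+1) / xVar K (i+1+1) - 1))) := key6 (cConst K t) (cConst K t - (cConst K t)⁻¹) (xVar K i) (xVar K (i+1)) (xVar K (i+1+1)) (xVar_ne_zero i) (xVar_ne_zero (i+1)) (xVar_ne_zero (i+1+1)) (xVar_ne (by omega)) (xVar_ne (by omega)) (xVar_ne (by omega))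
    rw [hL, hR, h4, h5, h6]
  · intro i j hij _ f
    have e1 : σ i (xVar K i) = xVar K (i+1) := by
      rw [hσx]; congr 1; exact Equiv.swap_apply_left _ _
    have e2 : σ i (xVar K (i+1)) = xVar K i := by
      rw [hσx]; congr 1; exact Equiv.swap_apply_right _ _
    have e3 : σ i (xVar K j) = xVar K j := by
      rw [hσx]; congr 1; exact Equiv.swap_apply_of_ne_of_ne (by omega) (by omega)
    have e4 : σ i (xVar K (j+1)) = xVar K (j+1) := by
      rw [hσx]; congr 1; exact Equiv.swap_apply_of_ne_of_ne (by omega) (by omega)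
    have e5 : σ j (xVar K i) = xVar K i := by
      rw [hσx]; congr 1; exact Equiv.swap_apply_of_ne_of_ne (by omega) (by omega)
    have e6 : σ j (xVar K (i+1)) = xVar K (i+1) := by
      rw [hσx]; congr 1; exact Equiv.swap_apply_of_ne_of_ne (by omega) (by omega)
    have e7 : σ j (xVar K j) = xVar K (j+1) := by
      rw [hσx]; congr 1; exact Equiv.swap_apply_left _ _
    have e8 : σ j (xVar K (j+1)) = xVar K j := by
      rw [hσx]; congr 1; exact Equiv.swap_apply_right _ _
    have hcomm := sigma_comm σ hσx hσc hij
    simp only [demLusztig_eq t ht, map_add, map_mul, map_sub, map_div₀, map_one, hσc,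
      e1, e2, e3, e4, e5, e6, e7, e8, hcomm]
    have hu := cConst_ne_zero (K := K) ht
    have d1 : xVar K i - xVar K (i+1) ≠ 0 := sub_ne_zero.mpr (xVar_ne (by omega))
    have d2 : xVar K j - xVar K (j+1) ≠ 0 := sub_ne_zero.mpr (xVar_ne (by omega))
    field_simp
    ring
end

section
/- In the quantum Weyl algebra W of rank n with generators ξ_i, ∂_i and relations ξ_iξ_j = qξ_jξ_i (i>j), ∂_i∂_j = q^{-1}∂_j∂_i (i>j), ∂_iξ_j = qξ_j∂_i (i≠j), ∂_iξ_i = 1 + q²ξ_i∂_i + (q²-1)Σ_{j<i} ξ_j∂_j, the functional representation on polynomials given by ∂_i(ξ_1^{k_1}···ξ_n^{k_n}) = q^{k_1+···+k_{i-1}}[k_i]_{q²} ξ_1^{k_1}···ξ_i^{k_i-1}···ξ_n^{k_n} and ξ_i acting by left multiplication, is a well-defined representation of W. -/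
open MvPolynomial

/-- The action of `ξ_i` (left multiplication in the quantum Weyl algebra) on the
polynomial model: on an ordered monomial `ξ^k` it multiplies by `q^{k_1+⋯+k_{i-1}}`
and raises the `i`-th exponent. -/
noncomputable def qXi {K : Type*} [Field K] {n : ℕ} (q : K) (i : Fin n)
    (f : MvPolynomial (Fin n) K) : MvPolynomial (Fin n) K :=
  Finsupp.sum (AddMonoidAlgebra.coeff f) fun m c =>
    (q ^ (∑ j ∈ Finset.univ.filter (fun j => j < i), m j)) •
      MvPolynomial.monomial (m + Finsupp.single i 1) c

/-- The action of `∂_i` on the polynomial model: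
`∂_i (ξ^k) = q^{k_1+⋯+k_{i-1}} [k_i]_{q²} ξ^{k - e_i}`, with `[k]_{q²} = ∑_{j<k} q^{2j}`. -/
noncomputable def qDel {K : Type*} [Field K] {n : ℕ} (q : K) (i : Fin n)
    (f : MvPolynomial (Fin n) K) : MvPolynomial (Fin n) K :=
  Finsupp.sum (AddMonoidAlgebra.coeff f) fun m c =>
    ((q ^ (∑ j ∈ Finset.univ.filter (fun j => j < i), m j)) *
        ∑ j ∈ Finset.range (m i), q ^ (2 * j)) •
      MvPolynomial.monomial (m - Finsupp.single i 1) c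


section QWAux

variable {K : Type*} [Field K] {n : ℕ}

variable {K : Type*} [Field K] {n : ℕ}

lemma qXi_monomial (q : K) (i : Fin n) (m : Fin n →₀ ℕ) (c : K) :
    qXi q i (monomial m c)
      = (q ^ (∑ j ∈ Finset.univ.filter (fun j => j < i), m j)) •
          monomial (m + Finsupp.single i 1) c := by
  rw [qXi, ← single_eq_monomial, AddMonoidAlgebra.coeff_single]
  rw [Finsupp.sum_single_index (by simp)]

lemma qDel_monomial (q : K) (i : Fin n) (m : Fin n →₀ ℕ) (c : K) :
    qDel q i (monomial m c)
      = ((q ^ (∑ j ∈ Finset.univ.filter (fun j => j < i), m j)) *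
          ∑ j ∈ Finset.range (m i), q ^ (2 * j)) •
          monomial (m - Finsupp.single i 1) c := by
  rw [qDel, ← single_eq_monomial, AddMonoidAlgebra.coeff_single]
  rw [Finsupp.sum_single_index (by simp)]

lemma qXi_add (q : K) (i : Fin n) (f g : MvPolynomial (Fin n) K) :
    qXi q i (f + g) = qXi q i f + qXi q i g := by
  rw [qXi, qXi, qXi, AddMonoidAlgebra.coeff_add]
  exact Finsupp.sum_add_index' (by simp) (fun m c1 c2 => by
    rw [← smul_add, ← map_add])

lemma qDel_add (q : K) (i : Fin n) (f g : MvPolynomial (Fin n) K) :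
    qDel q i (f + g) = qDel q i f + qDel q i g := by
  rw [qDel, qDel, qDel, AddMonoidAlgebra.coeff_add]
  exact Finsupp.sum_add_index' (by simp) (fun m c1 c2 => by
    rw [← smul_add, ← map_add])

lemma sum_single_filter (i j : Fin n) :
    ∑ t ∈ Finset.univ.filter (fun t => t < i), (Finsupp.single j 1 : Fin n →₀ ℕ) t
      = if j < i then 1 else 0 := by
  simp only [Finsupp.single_apply]
  rw [Finset.sum_ite_eq]
  simp

lemma A_add (i j : Fin n) (m : Fin n →₀ ℕ) :
    ∑ t ∈ Finset.univ.filter (fun t => t < i), (m + Finsupp.single j 1 : Fin n →₀ ℕ) t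
      = (∑ t ∈ Finset.univ.filter (fun t => t < i), m t) + (if j < i then 1 else 0) := by
  simp only [Finsupp.add_apply, Finset.sum_add_distrib, sum_single_filter]

lemma A_sub_of_not_lt (i j : Fin n) (m : Fin n →₀ ℕ) (h : ¬ j < i) :
    ∑ t ∈ Finset.univ.filter (fun t => t < i), (m - Finsupp.single j 1 : Fin n →₀ ℕ) t
      = ∑ t ∈ Finset.univ.filter (fun t => t < i), m t := by
  refine Finset.sum_congr rfl fun t ht => ?_
  have ht' : t < i := (Finset.mem_filter.mp ht).2
  have hjt : j ≠ t := fun hjt => h (hjt ▸ ht')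
  rw [Finsupp.tsub_apply, Finsupp.single_apply, if_neg hjt, tsub_zero]

lemma sub_add_single (j : Fin n) (m : Fin n →₀ ℕ) (h : 1 ≤ m j) :
    m - Finsupp.single j 1 + Finsupp.single j 1 = m :=
  tsub_add_cancel_of_le (Finsupp.single_le_iff.mpr h)

lemma A_sub_of_lt (i j : Fin n) (m : Fin n →₀ ℕ) (h : j < i) (hm : 1 ≤ m j) :
    ∑ t ∈ Finset.univ.filter (fun t => t < i), m t
      = (∑ t ∈ Finset.univ.filter (fun t => t < i), (m - Finsupp.single j 1 : Fin n →₀ ℕ) t) + 1 := by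
  conv_lhs => rw [← sub_add_single j m hm]
  rw [A_add, if_pos h]

lemma sub_apply_ne (i j : Fin n) (m : Fin n →₀ ℕ) (h : i ≠ j) :
    (m - Finsupp.single j 1 : Fin n →₀ ℕ) i = m i := by
  rw [Finsupp.tsub_apply, Finsupp.single_apply, if_neg (Ne.symm h), tsub_zero]

lemma add_apply_ne (i j : Fin n) (m : Fin n →₀ ℕ) (h : i ≠ j) :
    (m + Finsupp.single j 1 : Fin n →₀ ℕ) i = m i := by
  rw [Finsupp.add_apply, Finsupp.single_apply, if_neg (Ne.symm h), add_zero]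

lemma add_sub_comm' (i j : Fin n) (m : Fin n →₀ ℕ) (h : i ≠ j) :
    m + Finsupp.single j 1 - Finsupp.single i 1
      = m - Finsupp.single i 1 + Finsupp.single j 1 := by
  ext t
  simp only [Finsupp.tsub_apply, Finsupp.add_apply, Finsupp.single_apply]
  by_cases h1 : i = t <;> by_cases h2 : j = t
  · exact absurd (h1.trans h2.symm) h
  · simp [h1, h2]
  · simp [h1, h2]
  · simp [h1, h2]

lemma sub_sub_comm' (i j : Fin n) (m : Fin n →₀ ℕ) :
    m - Finsupp.single j 1 - Finsupp.single i 1
      = m - Finsupp.single i 1 - Finsupp.single j 1 := by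
  ext t
  simp only [Finsupp.tsub_apply]
  omega

lemma B_succ (q : K) (k : ℕ) :
    ∑ t ∈ Finset.range (k + 1), q ^ (2 * t)
      = 1 + q ^ 2 * ∑ t ∈ Finset.range k, q ^ (2 * t) := by
  rw [Finset.sum_range_succ' (fun t => q ^ (2 * t)), Finset.mul_sum]
  simp only [mul_zero, pow_zero]
  rw [add_comm]
  congr 1
  refine Finset.sum_congr rfl fun t _ => ?_
  ring

lemma B_geom (q : K) (k : ℕ) :
    (q ^ 2 - 1) * ∑ t ∈ Finset.range k, q ^ (2 * t) = q ^ (2 * k) - 1 := by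
  have h := geom_sum_mul (q ^ 2) k
  rw [pow_mul]
  calc (q ^ 2 - 1) * ∑ t ∈ Finset.range k, q ^ (2 * t)
      = (∑ t ∈ Finset.range k, (q ^ 2) ^ t) * (q ^ 2 - 1) := by
        rw [mul_comm]; congr 1; exact Finset.sum_congr rfl fun t _ => by rw [pow_mul]
    _ = (q ^ 2) ^ k - 1 := h
lemma key_telescope (q : K) (m : Fin n →₀ ℕ) (k : ℕ) :
    q ^ (∑ t ∈ Finset.univ.filter (fun t : Fin n => t.val < k), m t)
        * q ^ (∑ t ∈ Finset.univ.filter (fun t : Fin n => t.val < k), m t)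
      = 1 + (q ^ 2 - 1) * ∑ j ∈ Finset.univ.filter (fun j : Fin n => j.val < k),
          q ^ (∑ t ∈ Finset.univ.filter (fun t => t < j), m t)
            * q ^ (∑ t ∈ Finset.univ.filter (fun t => t < j), m t)
            * ∑ t ∈ Finset.range (m j), q ^ (2 * t) := by
  induction k with
  | zero => simp
  | succ k IH =>
    by_cases hk : k < n
    · have hfilt : Finset.univ.filter (fun j : Fin n => j.val < k + 1)
          = insert (⟨k, hk⟩ : Fin n) (Finset.univ.filter (fun j : Fin n => j.val < k)) := by
        ext j
        simp only [Finset.mem_filter, Finset.mem_insert, Finset.mem_univ, true_and, Fin.ext_iff]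
        omega
      have hnot : (⟨k, hk⟩ : Fin n) ∉ Finset.univ.filter (fun j : Fin n => j.val < k) := by
        simp
      have hin : Finset.univ.filter (fun t : Fin n => t < (⟨k, hk⟩ : Fin n))
          = Finset.univ.filter (fun t : Fin n => t.val < k) := by
        ext t; simp [Fin.lt_def]
      rw [hfilt, Finset.sum_insert hnot, Finset.sum_insert hnot, hin]
      have hB : q ^ (m ⟨k, hk⟩) * q ^ (m ⟨k, hk⟩)
          = 1 + (q ^ 2 - 1) * ∑ t ∈ Finset.range (m ⟨k, hk⟩), q ^ (2 * t) := by
        rw [← pow_add, ← two_mul, B_geom]; ring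
      rw [pow_add]
      have e1 : ∀ a b : K, (a * b) * (a * b) = (a * a) * (b * b) := fun a b => by ring
      rw [e1, IH, hB]
      ring
    · have hfilt : Finset.univ.filter (fun j : Fin n => j.val < k + 1)
          = Finset.univ.filter (fun j : Fin n => j.val < k) := by
        ext j
        simp only [Finset.mem_filter, Finset.mem_univ, true_and]
        have := j.isLt
        omega
      rw [hfilt]
      exact IH
lemma add_apply_self (i : Fin n) (m : Fin n →₀ ℕ) :
    (m + Finsupp.single i 1 : Fin n →₀ ℕ) i = m i + 1 := by
  simp


end QWAux

/-- The functional representation of the quantum Weyl algebra is well defined: the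
operators `qXi` and `qDel` satisfy the defining relations of `W`, hence induce a
representation of `W` on polynomials. -/
theorem quantum_weyl_functional_representation
    {K : Type*} [Field K] (n : ℕ) (q : K) (hq : q ≠ 0) :
    (∀ i j : Fin n, j < i → ∀ f : MvPolynomial (Fin n) K,
      qXi q i (qXi q j f) = q • qXi q j (qXi q i f))
    ∧ (∀ i j : Fin n, j < i → ∀ f : MvPolynomial (Fin n) K,
      qDel q i (qDel q j f) = q⁻¹ • qDel q j (qDel q i f))
    ∧ (∀ i j : Fin n, i ≠ j → ∀ f : MvPolynomial (Fin n) K,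
      qDel q i (qXi q j f) = q • qXi q j (qDel q i f))
    ∧ (∀ i : Fin n, ∀ f : MvPolynomial (Fin n) K,
      qDel q i (qXi q i f)
        = f + (q ^ 2) • qXi q i (qDel q i f)
          + (q ^ 2 - 1) • ∑ j ∈ Finset.univ.filter (fun j => j < i), qXi q j (qDel q j f)) := by
  refine ⟨?_, ?_, ?_, ?_⟩
  · intro i j hij f
    induction f using MvPolynomial.induction_on' with
    | add p r hp hr => simp only [qXi_add, hp, hr, smul_add]
    | monomial m c =>
      simp only [qXi_monomial, MvPolynomial.smul_monomial, smul_eq_mul]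
      rw [A_add i j m, A_add j i m, if_pos hij, if_neg (asymm hij), add_zero,
        add_right_comm m (Finsupp.single j 1)]
      congr 1
      rw [pow_succ]
      ring
  · intro i j hij f
    induction f using MvPolynomial.induction_on' with
    | add p r hp hr => simp only [qDel_add, hp, hr, smul_add]
    | monomial m c =>
      simp only [qDel_monomial, MvPolynomial.smul_monomial, smul_eq_mul]
      rw [sub_sub_comm' i j m,
        sub_apply_ne i j m (ne_of_gt hij), sub_apply_ne j i m (ne_of_lt hij),
        A_sub_of_not_lt j i m (asymm hij)]
      congr 1
      rcases Nat.eq_zero_or_pos (m j) with h0 | h1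
      · simp [h0]
      · rw [A_sub_of_lt i j m hij h1, pow_succ]
        field_simp
  · intro i j h f
    induction f using MvPolynomial.induction_on' with
    | add p r hp hr => simp only [qDel_add, qXi_add, hp, hr, smul_add]
    | monomial m c =>
      simp only [qDel_monomial, qXi_monomial, MvPolynomial.smul_monomial, smul_eq_mul]
      rw [add_sub_comm' i j m h, add_apply_ne i j m h, A_add i j m]
      congr 1
      rcases lt_or_gt_of_ne h with hij | hji
      · rw [if_neg (asymm hij), add_zero]
        rcases Nat.eq_zero_or_pos (m i) with h0 | h1
        · simp [h0]
        · rw [A_sub_of_lt j i m hij h1, pow_succ]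
          ring
      · rw [if_pos hji, A_sub_of_not_lt j i m (asymm hji), pow_succ]
        ring
  · intro i f
    induction f using MvPolynomial.induction_on' with
    | add p r hp hr =>
      simp only [qDel_add, qXi_add, hp, hr, smul_add, Finset.sum_add_distrib]
      abel
    | monomial m c =>
      have hterm : ∀ j : Fin n, qXi q j (qDel q j (monomial m c))
          = monomial m ((q ^ (∑ t ∈ Finset.univ.filter (fun t => t < j), m t)
              * q ^ (∑ t ∈ Finset.univ.filter (fun t => t < j), m t)
              * ∑ t ∈ Finset.range (m j), q ^ (2 * t)) * c) := by
        intro j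
        rw [qDel_monomial, MvPolynomial.smul_monomial, qXi_monomial,
          MvPolynomial.smul_monomial, A_sub_of_not_lt j j m (lt_irrefl j),
          smul_eq_mul, smul_eq_mul]
        rcases Nat.eq_zero_or_pos (m j) with h0 | h1
        · simp [h0]
        · rw [sub_add_single j m h1]
          congr 1
          ring
      have hsum : ∑ j ∈ Finset.univ.filter (fun j : Fin n => j < i),
            qXi q j (qDel q j (monomial m c))
          = monomial m (∑ j ∈ Finset.univ.filter (fun j : Fin n => j < i),
              (q ^ (∑ t ∈ Finset.univ.filter (fun t => t < j), m t)
              * q ^ (∑ t ∈ Finset.univ.filter (fun t => t < j), m t)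
              * ∑ t ∈ Finset.range (m j), q ^ (2 * t)) * c) := by
        rw [map_sum]
        exact Finset.sum_congr rfl fun j _ => hterm j
      rw [qXi_monomial, MvPolynomial.smul_monomial, qDel_monomial,
        MvPolynomial.smul_monomial, add_tsub_cancel_right,
        A_add i i m, if_neg (lt_irrefl i), add_zero, hterm i, hsum,
        MvPolynomial.smul_monomial, MvPolynomial.smul_monomial,
        add_apply_self, B_succ]
      rw [show ∀ a b d : K, (monomial m) a + (monomial m) b + (monomial m) d
          = (monomial m) (a + b + d) from fun a b d => by rw [← map_add, ← map_add]]
      congr 1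
      have hfi : Finset.univ.filter (fun j : Fin n => j < i)
          = Finset.univ.filter (fun j : Fin n => j.val < i.val) := by
        ext j; simp only [Finset.mem_filter, Finset.mem_univ, true_and, Fin.lt_def]
      have hkey := key_telescope q m i.val
      rw [← hfi] at hkey
      rw [← Finset.sum_mul]
      simp only [smul_eq_mul]
      linear_combination c * hkey
end

section
/- The invariant ring C[x_1,...,x_n,y_1,...,y_n]^{Σ_n}, where Σ_n permutes the pairs (x_i,y_i) diagonally, is generated as a C-algebra by the polarized power sums p_{a,b} := Σ_{i=1}^n x_i^a y_i^b with 0 ≤ a ≤ n and b ≥ 0. -/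
open MvPolynomial

/-- The polarized power sum `p_{a,b} = ∑_i x_i^a y_i^b` in
`ℂ[x_1,…,x_n,y_1,…,y_n]`, where `x_i = X (inl i)` and `y_i = X (inr i)`. -/
noncomputable def polarizedPowerSum (n : ℕ) (a b : ℕ) :
    MvPolynomial (Fin n ⊕ Fin n) ℂ :=
  ∑ i : Fin n, X (Sum.inl i) ^ a * X (Sum.inr i) ^ b


set_option maxRecDepth 10000

open Finset

namespace DiagInv

variable (n : ℕ)

abbrev R (n : ℕ) := MvPolynomial (Fin n ⊕ Fin n) ℂ

noncomputable def A (n : ℕ) : Subalgebra ℂ (R n) :=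
  Algebra.adjoin ℂ {g | ∃ a b : ℕ, a ≤ n ∧ g = polarizedPowerSum n a b}

lemma esymm_mem : ∀ k : ℕ, k ≤ n →
    esymm (Fin n) ℂ k ∈ Algebra.adjoin ℂ
      {q : MvPolynomial (Fin n) ℂ | ∃ a : ℕ, a ≤ n ∧ q = psum (Fin n) ℂ a} := by
  intro k
  induction k using Nat.strong_induction_on with
  | _ k ih =>
    intro hk
    rcases Nat.eq_zero_or_pos k with h0 | hpos
    · subst h0; rw [esymm_zero]; exact one_mem _
    · have hknz : ((k : ℂ)) ≠ 0 := Nat.cast_ne_zero.mpr hpos.ne'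
      have hC : esymm (Fin n) ℂ k =
          C ((k : ℂ)⁻¹) * ((k : MvPolynomial (Fin n) ℂ) * esymm (Fin n) ℂ k) := by
        rw [← C_eq_coe_nat, ← mul_assoc, ← C_mul, inv_mul_cancel₀ hknz, C_1, one_mul]
      rw [hC, mul_esymm_eq_sum]
      refine mul_mem ?_ (mul_mem (pow_mem (neg_mem (one_mem _)) _) (sum_mem fun a ha => ?_))
      · rw [← MvPolynomial.algebraMap_eq]; exact Subalgebra.algebraMap_mem _ _
      · rw [Finset.mem_filter, Finset.HasAntidiagonal.mem_antidiagonal] at ha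
        refine mul_mem (mul_mem (pow_mem (neg_mem (one_mem _)) _) ?_) ?_
        · exact ih a.1 ha.2 (by omega)
        · exact Algebra.subset_adjoin ⟨a.2, by omega, rfl⟩

lemma Esymm_mem (k : ℕ) (hk : k ≤ n) :
    rename Sum.inl (esymm (Fin n) ℂ k) ∈ A n := by
  have h1 := esymm_mem n k hk
  have hmem : rename Sum.inl (esymm (Fin n) ℂ k) ∈
      (Algebra.adjoin ℂ
        {q : MvPolynomial (Fin n) ℂ | ∃ a : ℕ, a ≤ n ∧ q = psum (Fin n) ℂ a}).map
        (rename (Sum.inl : Fin n → Fin n ⊕ Fin n)) := ⟨_, h1, rfl⟩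
  rw [AlgHom.map_adjoin] at hmem
  refine Algebra.adjoin_le ?_ hmem
  rintro q ⟨p', ⟨a, ha, rfl⟩, rfl⟩
  refine Algebra.subset_adjoin ⟨a, 0, ha, ?_⟩
  simp [polarizedPowerSum, psum, map_sum]

lemma vanish (a b : ℕ) (ha : n ≤ a) :
    ∑ S ∈ (univ : Finset (Fin n)).powerset,
      (-1 : R n) ^ S.card * (∏ t ∈ S, X (Sum.inl t)) * polarizedPowerSum n (a - S.card) b
      = 0 := by
  have key : ∀ S ∈ (univ : Finset (Fin n)).powerset, ∀ i : Fin n,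
      (-1 : R n) ^ S.card * (∏ t ∈ S, X (Sum.inl t)) *
          (X (Sum.inl i) ^ (a - S.card) * X (Sum.inr i) ^ b)
        = ((∏ t ∈ S, (-X (Sum.inl t))) * ∏ t ∈ univ \ S, (X (Sum.inl i) : R n)) *
          (X (Sum.inl i) ^ (a - n) * X (Sum.inr i) ^ b) := by
    intro S hS i
    have hcard : S.card ≤ n := by
      simpa using Finset.card_le_card (Finset.mem_powerset.mp hS)
    have h1 : a - S.card = (n - S.card) + (a - n) := by omega
    have h2 : ∏ t ∈ S, (-X (Sum.inl t) : R n) = (-1 : R n) ^ S.card * ∏ t ∈ S, X (Sum.inl t) := by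
      rw [← Finset.prod_const (-1 : R n), ← Finset.prod_mul_distrib]
      exact Finset.prod_congr rfl fun t _ => by ring
    have h3 : ∏ t ∈ univ \ S, (X (Sum.inl i) : R n) = X (Sum.inl i) ^ (n - S.card) := by
      rw [Finset.prod_const, Finset.card_sdiff_of_subset (Finset.subset_univ S), Finset.card_univ,
        Fintype.card_fin]
    rw [h2, h3, h1, pow_add]; ring
  calc ∑ S ∈ (univ : Finset (Fin n)).powerset,
        (-1 : R n) ^ S.card * (∏ t ∈ S, X (Sum.inl t)) * polarizedPowerSum n (a - S.card) b
      = ∑ i : Fin n, ∑ S ∈ (univ : Finset (Fin n)).powerset,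
          (-1 : R n) ^ S.card * (∏ t ∈ S, X (Sum.inl t)) *
            (X (Sum.inl i) ^ (a - S.card) * X (Sum.inr i) ^ b) := by
        rw [Finset.sum_comm]
        exact Finset.sum_congr rfl fun S _ => by rw [polarizedPowerSum, Finset.mul_sum]
    _ = ∑ i : Fin n,
          (∑ S ∈ (univ : Finset (Fin n)).powerset,
            (∏ t ∈ S, (-X (Sum.inl t))) * ∏ t ∈ univ \ S, (X (Sum.inl i) : R n)) *
          (X (Sum.inl i) ^ (a - n) * X (Sum.inr i) ^ b) := by
        refine Finset.sum_congr rfl fun i _ => ?_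
        rw [Finset.sum_mul]
        exact Finset.sum_congr rfl fun S hS => key S hS i
    _ = ∑ i : Fin n, (∏ t : Fin n, (-X (Sum.inl t) + X (Sum.inl i) : R n)) *
          (X (Sum.inl i) ^ (a - n) * X (Sum.inr i) ^ b) := by
        refine Finset.sum_congr rfl fun i _ => ?_
        rw [Finset.prod_add]
    _ = 0 := by
        refine Finset.sum_eq_zero fun i _ => ?_
        rw [Finset.prod_eq_zero (Finset.mem_univ i) (by ring), zero_mul]


lemma pps_mem (a b : ℕ) : polarizedPowerSum n a b ∈ A n := by
  induction a using Nat.strong_induction_on with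
  | _ a ih =>
    by_cases ha : a ≤ n
    · exact Algebra.subset_adjoin ⟨a, b, ha, rfl⟩
    · push_neg at ha
      have hv := vanish n a b ha.le
      rw [Finset.sum_powerset] at hv
      have hcard : (univ : Finset (Fin n)).card = n := by simp
      rw [hcard] at hv
      have hg : ∀ j : ℕ,
          ∑ S ∈ powersetCard j (univ : Finset (Fin n)),
            (-1 : R n) ^ S.card * (∏ t ∈ S, X (Sum.inl t)) *
              polarizedPowerSum n (a - S.card) b
          = (-1 : R n) ^ j * rename Sum.inl (esymm (Fin n) ℂ j) *
              polarizedPowerSum n (a - j) b := by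
        intro j
        have hE : (rename (Sum.inl : Fin n → Fin n ⊕ Fin n)) (esymm (Fin n) ℂ j)
            = ∑ S ∈ powersetCard j (univ : Finset (Fin n)), ∏ t ∈ S, (X (Sum.inl t) : R n) := by
          rw [esymm, map_sum]
          exact Finset.sum_congr rfl fun S _ => by rw [map_prod]; simp
        rw [hE, Finset.mul_sum, Finset.sum_mul]
        refine Finset.sum_congr rfl fun S hS => ?_
        rw [(Finset.mem_powersetCard_univ.mp hS : S.card = j)]
      rw [Finset.sum_congr rfl fun j _ => hg j, Finset.sum_range_succ'] at hv
      have h0 : (-1 : R n) ^ 0 * rename Sum.inl (esymm (Fin n) ℂ 0) *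
          polarizedPowerSum n (a - 0) b = polarizedPowerSum n a b := by
        rw [esymm_zero]; simp
      rw [h0] at hv
      have hrepr : polarizedPowerSum n a b
          = -∑ i ∈ Finset.range n, (-1 : R n) ^ (i + 1) *
              rename Sum.inl (esymm (Fin n) ℂ (i + 1)) *
              polarizedPowerSum n (a - (i + 1)) b := by
        linear_combination hv
      rw [hrepr]
      refine neg_mem (sum_mem fun i hi => ?_)
      have hin : i + 1 ≤ n := Finset.mem_range.mp hi
      exact mul_mem (mul_mem (pow_mem (neg_mem (one_mem _)) _) (Esymm_mem n (i + 1) hin))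
        (ih (a - (i + 1)) (by omega))


noncomputable def M (i : Fin n) (u : ℕ × ℕ) : R n :=
  X (Sum.inl i) ^ u.1 * X (Sum.inr i) ^ u.2

lemma M_add (i : Fin n) (u v : ℕ × ℕ) : M n i (u + v) = M n i u * M n i v := by
  simp only [M, Prod.fst_add, Prod.snd_add, pow_add]; ring

lemma pps_eq (a b : ℕ) : polarizedPowerSum n a b = ∑ i, M n i (a, b) := rfl

noncomputable def injSum (k : ℕ) (l : Fin k → ℕ × ℕ) : R n :=
  ∑ φ : Fin k → Fin n,
    if Function.Injective φ then ∏ j, M n (φ j) (l j) else 0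

lemma injSum_cons (k : ℕ) (c : ℕ × ℕ) (l : Fin k → ℕ × ℕ) :
    injSum n (k + 1) (Fin.cons c l)
      = polarizedPowerSum n c.1 c.2 * injSum n k l
        - ∑ j : Fin k, injSum n k (Function.update l j (l j + c)) := by
  classical
  have lhs_eq : injSum n (k + 1) (Fin.cons c l)
      = ∑ ψ : Fin k → Fin n, ∑ i : Fin n,
          if (i ∉ Set.range ψ ∧ Function.Injective ψ)
          then M n i c * ∏ j, M n (ψ j) (l j) else 0 := by
    rw [injSum, ← (Fin.consEquiv (fun _ : Fin (k + 1) => Fin n)).sum_comp,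
      Fintype.sum_prod_type, Finset.sum_comm]
    refine Finset.sum_congr rfl fun ψ _ => Finset.sum_congr rfl fun i _ => ?_
    have he : (Fin.consEquiv (fun _ : Fin (k + 1) => Fin n)) (i, ψ) = Fin.cons i ψ := rfl
    rw [he]
    by_cases h : i ∉ Set.range ψ ∧ Function.Injective ψ
    · rw [if_pos (Fin.cons_injective_iff.mpr h), if_pos h, Fin.prod_univ_succ]
      simp [M]
    · rw [if_neg (fun hc => h (Fin.cons_injective_iff.mp hc)), if_neg h]
  rw [lhs_eq]
  have rhs1 : polarizedPowerSum n c.1 c.2 * injSum n k l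
      = ∑ ψ : Fin k → Fin n, ∑ i : Fin n,
          if Function.Injective ψ then M n i c * ∏ j, M n (ψ j) (l j) else 0 := by
    rw [pps_eq, injSum, Finset.sum_mul_sum]
    rw [Finset.sum_comm]
    refine Finset.sum_congr rfl fun ψ _ => Finset.sum_congr rfl fun i _ => ?_
    rw [mul_ite, mul_zero]
  have rhs2 : ∑ j : Fin k, injSum n k (Function.update l j (l j + c))
      = ∑ ψ : Fin k → Fin n,
          if Function.Injective ψ
          then ∑ j : Fin k, M n (ψ j) c * ∏ j', M n (ψ j') (l j') else 0 := by
    simp only [injSum]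
    rw [Finset.sum_comm]
    refine Finset.sum_congr rfl fun ψ _ => ?_
    by_cases hψ : Function.Injective ψ
    · rw [if_pos hψ]
      simp only [if_pos hψ]
      refine Finset.sum_congr rfl fun j _ => ?_
      have hupd : (fun j' => M n (ψ j') (Function.update l j (l j + c) j'))
          = Function.update (fun j' => M n (ψ j') (l j')) j (M n (ψ j) (l j + c)) := by
        funext j'
        rcases eq_or_ne j' j with h | h
        · subst h; simp
        · simp [Function.update_of_ne h]
      rw [hupd, Finset.prod_update_of_mem (Finset.mem_univ j), M_add,
        Finset.prod_eq_mul_prod_sdiff_singleton_of_mem (Finset.mem_univ j)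
          (fun j' => M n (ψ j') (l j'))]
      ring
    · simp [if_neg hψ]
  rw [rhs1, rhs2, ← Finset.sum_sub_distrib]
  refine Finset.sum_congr rfl fun ψ _ => ?_
  by_cases hψ : Function.Injective ψ
  · simp only [hψ, and_true, if_pos hψ, if_true]
    rw [← Finset.sum_filter]
    have hfilt : Finset.filter (fun i => i ∉ Set.range ψ) Finset.univ
        = (Finset.univ : Finset (Fin n)) \ Finset.univ.image ψ := by
      ext i
      simp [Set.mem_range]
    rw [hfilt, Finset.sum_sdiff_eq_sub (Finset.subset_univ _)]
    congr 1
    rw [Finset.sum_image (fun j _ j' _ h => hψ h)]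
  · simp [hψ]

lemma injSum_mem : ∀ (k : ℕ) (l : Fin k → ℕ × ℕ), injSum n k l ∈ A n := by
  intro k
  induction k with
  | zero =>
    intro l
    have h1 : injSum n 0 l = ∑ φ : Fin 0 → Fin n, ∏ j, M n (φ j) (l j) :=
      Finset.sum_congr rfl fun φ _ => if_pos (Function.injective_of_subsingleton φ)
    have h2 : injSum n 0 l = 1 := by rw [h1]; simp
    rw [h2]; exact one_mem _
  | succ k IH =>
    intro L
    have hL : L = Fin.cons (L 0) (fun j => L j.succ) := (Fin.cons_self_tail L).symm
    rw [hL, injSum_cons]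
    exact sub_mem (mul_mem (pps_mem n _ _) (IH _)) (sum_mem fun j _ => IH _)


lemma injSum_perm (u : Fin n → ℕ × ℕ) :
    injSum n n u = ∑ σ : Equiv.Perm (Fin n), ∏ j, M n (σ j) (u j) := by
  classical
  rw [injSum, ← Finset.sum_filter]
  refine Finset.sum_bij' (fun φ hφ => Equiv.ofBijective φ
      (Finite.injective_iff_bijective.mp (Finset.mem_filter.mp hφ).2))
    (fun σ _ => ⇑σ) ?_ ?_ ?_ ?_ ?_
  · intro φ hφ; exact Finset.mem_univ _
  · intro σ _
    exact Finset.mem_filter.mpr ⟨Finset.mem_univ _, σ.injective⟩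
  · intro φ hφ; rfl
  · intro σ _; exact Equiv.ext fun x => rfl
  · intro φ hφ; rfl

lemma monomial_eq_prod (d : (Fin n ⊕ Fin n) →₀ ℕ) (r : ℂ) :
    (monomial d r : R n) = C r * ∏ i : Fin n, M n i (d (Sum.inl i), d (Sum.inr i)) := by
  rw [monomial_eq]
  congr 1
  rw [Finsupp.prod_fintype _ _ (fun s => pow_zero _), Fintype.prod_sum_type,
    ← Finset.prod_mul_distrib]
  rfl

lemma symm_monomial (d : (Fin n ⊕ Fin n) →₀ ℕ) (r : ℂ) :
    ∑ σ : Equiv.Perm (Fin n), rename (Sum.map ⇑σ ⇑σ) ((monomial d r : R n)) ∈ A n := by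
  have hterm : ∀ σ : Equiv.Perm (Fin n),
      rename (Sum.map ⇑σ ⇑σ) ((monomial d r : R n))
        = C r * ∏ i : Fin n, M n (σ i) (d (Sum.inl i), d (Sum.inr i)) := by
    intro σ
    rw [monomial_eq_prod, map_mul, rename_C, map_prod]
    congr 1
    refine Finset.prod_congr rfl fun i _ => ?_
    simp [M]
  rw [Finset.sum_congr rfl fun σ _ => hterm σ, ← Finset.mul_sum,
    ← injSum_perm n (fun i => (d (Sum.inl i), d (Sum.inr i)))]
  exact mul_mem (by rw [← MvPolynomial.algebraMap_eq]; exact Subalgebra.algebraMap_mem _ _)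
    (injSum_mem n n _)

end DiagInv

open DiagInv in
/-- The invariant ring `ℂ[x_1,…,x_n,y_1,…,y_n]^{Σ_n}` (for the diagonal permutation
action on the pairs `(x_i, y_i)`) is generated as a `ℂ`-algebra by the polarized power
sums `p_{a,b}` with `0 ≤ a ≤ n` and `b ≥ 0`. -/
theorem diagonal_invariants_generated_by_polarized_power_sums (n : ℕ) :
    ∀ f : MvPolynomial (Fin n ⊕ Fin n) ℂ,
      (∀ σ : Equiv.Perm (Fin n), rename (Sum.map σ σ) f = f)
        ↔ f ∈ Algebra.adjoin ℂ
            {g | ∃ a b : ℕ, a ≤ n ∧ g = polarizedPowerSum n a b} := by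
  intro f
  constructor
  · intro hf
    show f ∈ A n
    have hcard : ((Fintype.card (Equiv.Perm (Fin n)) : ℂ)) ≠ 0 := by
      rw [Fintype.card_perm]
      exact_mod_cast Nat.factorial_ne_zero _
    have havg : (Fintype.card (Equiv.Perm (Fin n)) : ℂ) • f
        = ∑ σ : Equiv.Perm (Fin n), rename (Sum.map ⇑σ ⇑σ) f := by
      rw [Finset.sum_congr rfl fun σ _ => hf σ, Finset.sum_const, Finset.card_univ,
        Nat.cast_smul_eq_nsmul]
    have hmem : (∑ σ : Equiv.Perm (Fin n), rename (Sum.map ⇑σ ⇑σ) f) ∈ A n := by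
      have hexp : ∀ σ : Equiv.Perm (Fin n), rename (Sum.map ⇑σ ⇑σ) f
          = ∑ d ∈ f.support, rename (Sum.map ⇑σ ⇑σ) (monomial d (coeff d f)) := by
        intro σ
        rw [← map_sum, ← as_sum]
      rw [Finset.sum_congr rfl fun σ _ => hexp σ, Finset.sum_comm]
      exact sum_mem fun d _ => symm_monomial n d (coeff d f)
    have hrw : f = ((Fintype.card (Equiv.Perm (Fin n)) : ℂ))⁻¹ •
        ∑ σ : Equiv.Perm (Fin n), rename (Sum.map ⇑σ ⇑σ) f := by
      rw [← havg, smul_smul, inv_mul_cancel₀ hcard, one_smul]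
    rw [hrw]
    exact (A n).smul_mem hmem _
  · intro hf σ
    have hgen : ∀ g ∈ {g | ∃ a b : ℕ, a ≤ n ∧ g = polarizedPowerSum n a b},
        rename (Sum.map ⇑σ ⇑σ) g = g := by
      rintro g ⟨a, b, ha, rfl⟩
      rw [polarizedPowerSum, map_sum]
      have h1 : ∀ i : Fin n,
          rename (Sum.map ⇑σ ⇑σ) ((X (Sum.inl i) ^ a * X (Sum.inr i) ^ b : R n))
            = X (Sum.inl (σ i)) ^ a * X (Sum.inr (σ i)) ^ b := fun i => by simp
      rw [Finset.sum_congr rfl fun i _ => h1 i]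
      exact Equiv.sum_comp σ fun i => (X (Sum.inl i) ^ a * X (Sum.inr i) ^ b : R n)
    have hmem : f ∈ AlgHom.equalizer
        (rename (Sum.map ⇑σ ⇑σ) : R n →ₐ[ℂ] R n) (AlgHom.id ℂ (R n)) := by
      refine Algebra.adjoin_le (fun g hg => ?_) hf
      have := hgen g hg
      simpa [AlgHom.mem_equalizer] using this
    simpa using hmem
end

section
/- Let H be a Hopf algebra over a field, A an H-module algebra, and μ: H → A a quantum moment map, i.e., an algebra homomorphism satisfying μ(h)a = (h_{(1)} ▸ a) μ(h_{(2)}) for all h ∈ H, a ∈ A. Let χ: H → k be an algebra character and I_χ := A·{μ(h) - χ(h) : h ∈ H} the left ideal. Then the H-invariants (A/I_χ)^H form an associative algebra under the multiplication induced from A. -/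
open TensorProduct

/-- The left ideal `I_χ = A·{μ(h) - χ(h) : h ∈ H}` of a quantum moment map twisted by a
character `χ`. -/
noncomputable def momentIdeal {k H A : Type*} [Field k] [Ring H] [HopfAlgebra k H]
    [Ring A] [Algebra k A] (μ : H →ₐ[k] A) (χ : H →ₐ[k] k) : Submodule A A :=
  Submodule.span A (Set.range fun h => μ h - algebraMap k A (χ h))

section Aux

variable {k H A : Type*} [Field k] [Ring H] [HopfAlgebra k H] [Ring A] [Algebra k A]

theorem momentIdeal.gen_mem (μ : H →ₐ[k] A) (χ : H →ₐ[k] k) (h : H) :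
    μ h - algebraMap k A (χ h) ∈ momentIdeal μ χ :=
  Submodule.subset_span ⟨h, rfl⟩

theorem momentIdeal.mul_mem_left (μ : H →ₐ[k] A) (χ : H →ₐ[k] k) (a : A) {z : A}
    (hz : z ∈ momentIdeal μ χ) : a * z ∈ momentIdeal μ χ := by
  simpa [smul_eq_mul] using (momentIdeal μ χ).smul_mem a hz

theorem momentIdeal.ksmul_mem (μ : H →ₐ[k] A) (χ : H →ₐ[k] k) (c : k) {z : A}
    (hz : z ∈ momentIdeal μ χ) : c • z ∈ momentIdeal μ χ := by
  rw [Algebra.smul_def]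
  exact momentIdeal.mul_mem_left μ χ _ hz

/-- Right multiplication by `μ h` preserves the moment ideal. -/
theorem momentIdeal.mul_mu_mem (μ : H →ₐ[k] A) (χ : H →ₐ[k] k) {z : A}
    (hz : z ∈ momentIdeal μ χ) (h : H) : z * μ h ∈ momentIdeal μ χ := by
  induction hz using Submodule.span_induction with
  | mem x hx =>
    obtain ⟨g, rfl⟩ := hx
    have : (μ g - algebraMap k A (χ g)) * μ h
        = (μ (g * h) - algebraMap k A (χ (g * h)))
          - algebraMap k A (χ g) * (μ h - algebraMap k A (χ h)) := by
      simp only [map_mul]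
      noncomm_ring
    rw [this]
    exact sub_mem (momentIdeal.gen_mem μ χ _)
      (momentIdeal.mul_mem_left μ χ _ (momentIdeal.gen_mem μ χ h))
  | zero => simpa using (momentIdeal μ χ).zero_mem
  | add x y hx hy ihx ihy => simpa [add_mul] using add_mem ihx ihy
  | smul a x hx ihx => simpa [smul_eq_mul, mul_assoc] using momentIdeal.mul_mem_left μ χ a ihx

/-- From a finite Sweedler decomposition of `comul h`, `∑ ε(h₁) • h₂ = h`. -/
theorem sweedler_counit_sum {m : ℕ} {h : H} {h₁ h₂ : Fin m → H}
    (hc : Coalgebra.comul (R := k) h = ∑ i : Fin m, h₁ i ⊗ₜ[k] h₂ i) :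
    ∑ i : Fin m, Coalgebra.counit (R := k) (h₁ i) • h₂ i = h := by
  have := congrArg ((TensorProduct.lid k H).toLinearMap.comp
      ((Coalgebra.counit (R := k)).rTensor H)) hc
  simpa [Coalgebra.rTensor_counit_comul, map_sum] using this.symm

end Aux

/-- Quantum Hamiltonian reduction: if `H` is a Hopf algebra acting on an algebra `A`
(making `A` an `H`-module algebra), `μ : H → A` is a quantum moment map
(`μ(h)a = (h₍₁₎ ▸ a) μ(h₍₂₎)`), `χ` is a character, and the left ideal
`I_χ = A·(μ - χ)(H)` is `H`-stable, then the `H`-invariants of `A/I_χ` form an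
associative algebra under the multiplication induced from `A`: the product of invariant
classes is invariant, and it is independent of the choice of lifts. -/
theorem quantum_hamiltonian_reduction_invariants_algebra
    {k H A : Type*} [Field k] [Ring H] [HopfAlgebra k H] [Ring A] [Algebra k A]
    (act : H →ₗ[k] Module.End k A)
    (hact1 : ∀ h : H, act h (1 : A) = Coalgebra.counit (R := k) h • (1 : A))
    (μ : H →ₐ[k] A) (χ : H →ₐ[k] k)
    (hsweedler : ∀ h : H, ∃ (m : ℕ) (h₁ h₂ : Fin m → H),
      (Coalgebra.comul (R := k) h = ∑ i : Fin m, h₁ i ⊗ₜ[k] h₂ i) ∧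
      (∀ a b : A, act h (a * b) = ∑ i : Fin m, act (h₁ i) a * act (h₂ i) b) ∧
      (∀ a : A, μ h * a = ∑ i : Fin m, act (h₁ i) a * μ (h₂ i)))
    (hstable : ∀ (h : H) (x : A), x ∈ momentIdeal μ χ → act h x ∈ momentIdeal μ χ) :
    (∀ x y : A,
      (∀ h : H, act h x - Coalgebra.counit (R := k) h • x ∈ momentIdeal μ χ) →
      (∀ h : H, act h y - Coalgebra.counit (R := k) h • y ∈ momentIdeal μ χ) →
      ∀ h : H, act h (x * y) - Coalgebra.counit (R := k) h • (x * y) ∈ momentIdeal μ χ)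
    ∧ (∀ x x' y y' : A,
      (∀ h : H, act h x - Coalgebra.counit (R := k) h • x ∈ momentIdeal μ χ) →
      (∀ h : H, act h y - Coalgebra.counit (R := k) h • y ∈ momentIdeal μ χ) →
      x - x' ∈ momentIdeal μ χ → y - y' ∈ momentIdeal μ χ →
      x * y - x' * y' ∈ momentIdeal μ χ) := by
  set I := momentIdeal μ χ with hI
  -- key lemma: if y is invariant mod I, then I * y ⊆ I
  have key : ∀ y : A,
      (∀ h : H, act h y - Coalgebra.counit (R := k) h • y ∈ I) →
      ∀ z ∈ I, z * y ∈ I := by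
    intro y hy z hz
    induction hz using Submodule.span_induction with
    | mem x hx =>
      obtain ⟨g, rfl⟩ := hx
      obtain ⟨m, h₁, h₂, hc, _, hmom⟩ := hsweedler g
      have hsum := sweedler_counit_sum (k := k) hc
      -- μ g * y - y * μ g ∈ I
      have h1 : μ g * y - y * μ g ∈ I := by
        have : μ g * y - y * μ g
            = ∑ i : Fin m, (act (h₁ i) y - Coalgebra.counit (R := k) (h₁ i) • y) * μ (h₂ i) := by
          rw [hmom y]
          have : y * μ g = ∑ i : Fin m,
              (Coalgebra.counit (R := k) (h₁ i) • y) * μ (h₂ i) := by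
            calc y * μ g = y * μ (∑ i : Fin m, Coalgebra.counit (R := k) (h₁ i) • h₂ i) := by
                  rw [hsum]
              _ = ∑ i : Fin m, (Coalgebra.counit (R := k) (h₁ i) • y) * μ (h₂ i) := by
                  rw [map_sum, Finset.mul_sum]
                  refine Finset.sum_congr rfl fun i _ => ?_
                  rw [map_smul, mul_smul_comm, smul_mul_assoc]
          rw [this, ← Finset.sum_sub_distrib]
          refine Finset.sum_congr rfl fun i _ => ?_
          rw [sub_mul]
        rw [this]
        exact Submodule.sum_mem _ fun i _ =>
          momentIdeal.mul_mu_mem μ χ (hy (h₁ i)) (h₂ i)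
      -- (μ g - χ g) * y = (μ g * y - y * μ g) + y * (μ g - χ g)
      have h2 : (μ g - algebraMap k A (χ g)) * y
          = (μ g * y - y * μ g) + y * (μ g - algebraMap k A (χ g)) := by
        rw [sub_mul, mul_sub]
        have : algebraMap k A (χ g) * y = y * algebraMap k A (χ g) :=
          Algebra.commutes _ _
        rw [this]; noncomm_ring
      rw [h2]
      exact add_mem h1 (momentIdeal.mul_mem_left μ χ y (momentIdeal.gen_mem μ χ g))
    | zero => simpa using I.zero_mem
    | add a b ha hb iha ihb => simpa [add_mul] using add_mem iha ihb
    | smul a x hx ihx => simpa [smul_eq_mul, mul_assoc] using momentIdeal.mul_mem_left μ χ a ihx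
  constructor
  · -- invariance of products
    intro x y hx hy h
    obtain ⟨m, h₁, h₂, hc, hmul, _⟩ := hsweedler h
    have hsum := sweedler_counit_sum (k := k) hc
    have hcsum : ∑ i : Fin m,
        Coalgebra.counit (R := k) (h₁ i) * Coalgebra.counit (R := k) (h₂ i)
        = Coalgebra.counit (R := k) h := by
      have := congrArg (Coalgebra.counit (R := k)) hsum
      simpa [map_sum, smul_eq_mul] using this
    have expand : act h (x * y) - Coalgebra.counit (R := k) h • (x * y)
        = ∑ i : Fin m,
          (act (h₁ i) x * (act (h₂ i) y - Coalgebra.counit (R := k) (h₂ i) • y)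
            + Coalgebra.counit (R := k) (h₂ i) •
              ((act (h₁ i) x - Coalgebra.counit (R := k) (h₁ i) • x) * y)) := by
      rw [hmul x y, ← hcsum, Finset.sum_smul, ← Finset.sum_sub_distrib]
      refine Finset.sum_congr rfl fun i _ => ?_
      simp only [mul_sub, sub_mul, smul_sub, mul_smul_comm, smul_mul_assoc, smul_smul]
      rw [mul_comm (Coalgebra.counit (R := k) (h₂ i)) (Coalgebra.counit (R := k) (h₁ i))]
      abel
    rw [expand]
    refine Submodule.sum_mem _ fun i _ => add_mem ?_ ?_
    · exact momentIdeal.mul_mem_left μ χ _ (hy (h₂ i))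
    · exact momentIdeal.ksmul_mem μ χ _ (key y hy _ (hx (h₁ i)))
  · -- well-definedness
    intro x x' y y' hx hy hxx' hyy'
    have hy' : ∀ h : H, act h y' - Coalgebra.counit (R := k) h • y' ∈ I := by
      intro h
      have : act h y' - Coalgebra.counit (R := k) h • y'
          = (act h y - Coalgebra.counit (R := k) h • y)
            - (act h (y - y') - Coalgebra.counit (R := k) h • (y - y')) := by
        simp only [map_sub, smul_sub]
        abel
      rw [this]
      exact sub_mem (hy h)
        (sub_mem (hstable h _ hyy') (momentIdeal.ksmul_mem μ χ _ hyy'))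
    have : x * y - x' * y' = x * (y - y') + (x - x') * y' := by noncomm_ring
    rw [this]
    exact add_mem (momentIdeal.mul_mem_left μ χ x hyy') (key y' hy' _ hxx')
end
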